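/- arXiv:1608.01498 — 6 statements merged into one kernel-verified Lean document; each statement's English description precedes it below -/
import Mathlib

section
/- Let n ≥ 1 and let φ : EuclideanSpace ℝ (Fin n) → ℝ be a C² function which is superharmonic, i.e. Δφ(x) ≤ 0 for all x, and such that the function x ↦ ‖∇φ(x)‖ is integrable with respect to Lebesgue measure. Then φ is harmonic, i.e. Δφ(x) = 0 for all x. -/
open MeasureTheory Filter Set

/-- The Euclidean Laplacian: the trace of the second derivative. -/
noncomputable def eLaplacian {n : ℕ} (f : EuclideanSpace ℝ (Fin n) → ℝ)
    (x : EuclideanSpace ℝ (Fin n)) : ℝ :=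
  ∑ i, iteratedFDeriv ℝ 2 f x ![EuclideanSpace.single i 1, EuclideanSpace.single i 1]

section Aux

variable {n : ℕ}

local notation "E" => EuclideanSpace ℝ (Fin n)

lemma second_deriv_eq (φ : E → ℝ) (hC2 : ContDiff ℝ 2 φ) (x v : E) :
    fderiv ℝ (fun y => fderiv ℝ φ y v) x v = iteratedFDeriv ℝ 2 φ x ![v, v] := by
  rw [iteratedFDeriv_two_apply]
  have hd : DifferentiableAt ℝ (fderiv ℝ φ) x :=
    ((hC2.fderiv_right (m := 1) (by norm_num)).differentiable one_ne_zero).differentiableAt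
  rw [fderiv_clm_apply hd (differentiableAt_const v)]
  simp

end Aux

section Aux2
variable {n : ℕ}
local notation "E" => EuclideanSpace ℝ (Fin n)

lemma ibp (φ ψ : E → ℝ) (hφ : ContDiff ℝ 2 φ) (hψ : ContDiff ℝ 1 ψ)
    (hψc : HasCompactSupport ψ) :
    ∫ x, ψ x * eLaplacian φ x =
      -∑ i, ∫ x, fderiv ℝ ψ x (EuclideanSpace.single i 1) *
        fderiv ℝ φ x (EuclideanSpace.single i 1) := by
  set e : Fin n → E := fun i => EuclideanSpace.single i 1 with he
  have hφ1 : ContDiff ℝ 1 (fderiv ℝ φ) := hφ.fderiv_right (m := 1) (by norm_num)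
  have hg : ∀ i, ContDiff ℝ 1 (fun y => fderiv ℝ φ y (e i)) := fun i =>
    (ContinuousLinearMap.apply ℝ ℝ (e i)).contDiff.comp hφ1
  have hgc : ∀ i, Continuous (fun y => fderiv ℝ φ y (e i)) := fun i => (hg i).continuous
  have hg'c : ∀ i, Continuous (fun x => fderiv ℝ (fun y => fderiv ℝ φ y (e i)) x (e i)) :=
    fun i => ((hg i).continuous_fderiv one_ne_zero).clm_apply continuous_const
  have hψcont : Continuous ψ := hψ.continuous
  have key : ∀ i : Fin n, ∫ x, ψ x * fderiv ℝ (fun y => fderiv ℝ φ y (e i)) x (e i) =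
      -∫ x, fderiv ℝ ψ x (e i) * fderiv ℝ φ x (e i) := by
    intro i
    apply integral_mul_fderiv_eq_neg_fderiv_mul_of_integrable
    · exact (((hψ.continuous_fderiv one_ne_zero).clm_apply continuous_const).mul
        (hgc i)).integrable_of_hasCompactSupport (((hψc.fderiv_apply ℝ (e i)).mul_right))
    · exact (hψcont.mul (hg'c i)).integrable_of_hasCompactSupport (hψc.mul_right)
    · exact (hψcont.mul (hgc i)).integrable_of_hasCompactSupport (hψc.mul_right)
    · exact fun x _ => hψ.differentiable one_ne_zero x
    · exact fun x _ => (hg i).differentiable one_ne_zero x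
  have hint : ∀ i : Fin n, Integrable (fun x =>
      ψ x * iteratedFDeriv ℝ 2 φ x ![e i, e i]) volume := by
    intro i
    apply Continuous.integrable_of_hasCompactSupport _ (hψc.mul_right)
    have : Continuous (fun x => iteratedFDeriv ℝ 2 φ x ![e i, e i]) := by
      have h1 : Continuous (iteratedFDeriv ℝ 2 φ) :=
        hφ.continuous_iteratedFDeriv (by norm_num)
      exact (ContinuousMultilinearMap.apply ℝ _ ℝ ![e i, e i]).continuous.comp h1
    exact hψcont.mul this
  calc ∫ x, ψ x * eLaplacian φ x
      = ∫ x, ∑ i, ψ x * iteratedFDeriv ℝ 2 φ x ![e i, e i] := by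
        simp only [eLaplacian, Finset.mul_sum, he]
    _ = ∑ i, ∫ x, ψ x * iteratedFDeriv ℝ 2 φ x ![e i, e i] :=
        integral_finset_sum _ (fun i _ => hint i)
    _ = ∑ i, ∫ x, ψ x * fderiv ℝ (fun y => fderiv ℝ φ y (e i)) x (e i) := by
        refine Finset.sum_congr rfl fun i _ => ?_
        congr 1 with x
        rw [second_deriv_eq φ hφ x (e i)]
    _ = ∑ i, -∫ x, fderiv ℝ ψ x (e i) * fderiv ℝ φ x (e i) :=
        Finset.sum_congr rfl fun i _ => key i
    _ = -∑ i, ∫ x, fderiv ℝ ψ x (e i) * fderiv ℝ φ x (e i) := by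
        rw [Finset.sum_neg_distrib]

end Aux2

section Aux3
variable {n : ℕ}
local notation "E" => EuclideanSpace ℝ (Fin n)

-- norm of gradient equals norm of fderiv
lemma norm_gradient_eq (φ : E → ℝ) (x : E) : ‖gradient φ x‖ = ‖fderiv ℝ φ x‖ := by
  rw [gradient, LinearIsometryEquiv.norm_map]

lemma abs_fderiv_single_le (φ : E → ℝ) (x : E) (i : Fin n) :
    |fderiv ℝ φ x (EuclideanSpace.single i 1)| ≤ ‖gradient φ x‖ := by
  rw [norm_gradient_eq]
  calc |fderiv ℝ φ x (EuclideanSpace.single i 1)|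
      ≤ ‖fderiv ℝ φ x‖ * ‖(EuclideanSpace.single i 1 : E)‖ :=
        (fderiv ℝ φ x).le_opNorm _
    _ = ‖fderiv ℝ φ x‖ := by rw [EuclideanSpace.norm_single]; simp

end Aux3

section Aux4
variable {n : ℕ}
local notation "E" => EuclideanSpace ℝ (Fin n)

lemma exists_cutoff : ∃ M : ℝ, 0 ≤ M ∧ ∀ R : ℝ, 1 ≤ R → ∃ ψ : E → ℝ,
    ContDiff ℝ 1 ψ ∧ HasCompactSupport ψ ∧ (∀ x, 0 ≤ ψ x) ∧
    (∀ x ∈ Metric.closedBall (0:E) R, ψ x = 1) ∧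
    (∀ x, ‖fderiv ℝ ψ x‖ ≤ M / R) := by
  let b : ContDiffBump (0 : E) :=
    { rIn := 1, rOut := 2, rIn_pos := one_pos, rIn_lt_rOut := one_lt_two }
  have hb1 : ContDiff ℝ 1 (⇑b) := by exact_mod_cast b.contDiff (n := 1)
  obtain ⟨M₀, hM₀⟩ := (b.hasCompactSupport.fderiv ℝ).exists_bound_of_continuous
    (hb1.continuous_fderiv one_ne_zero)
  refine ⟨max M₀ 0, le_max_right _ _, fun R hR => ?_⟩
  have hR0 : 0 < R := lt_of_lt_of_le one_pos hR
  set L : E →L[ℝ] E := R⁻¹ • ContinuousLinearMap.id ℝ E with hLdef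
  have hLx : ∀ x : E, L x = R⁻¹ • x := fun x => rfl
  have hLnorm : ∀ x : E, ‖L x‖ = R⁻¹ * ‖x‖ := by
    intro x
    rw [hLx, norm_smul, Real.norm_eq_abs, abs_of_pos (inv_pos.2 hR0)]
  refine ⟨⇑b ∘ ⇑L, hb1.comp L.contDiff, ?_, fun x => b.nonneg, ?_, ?_⟩
  · apply HasCompactSupport.intro (isCompact_closedBall (0:E) (2*R))
    intro x hx
    simp only [Function.comp_apply]
    apply b.zero_of_le_dist
    simp only [Metric.mem_closedBall, not_le, dist_zero_right] at hx
    show (2:ℝ) ≤ dist (L x) 0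
    rw [dist_zero_right, hLnorm, le_inv_mul_iff₀ hR0]
    linarith
  · intro x hx
    simp only [Function.comp_apply]
    apply b.one_of_mem_closedBall
    simp only [Metric.mem_closedBall, dist_zero_right] at hx ⊢
    rw [hLnorm]
    show R⁻¹ * ‖x‖ ≤ (1:ℝ)
    rw [inv_mul_le_iff₀ hR0, mul_one]
    exact hx
  · intro x
    have h1 : HasFDerivAt (⇑b) (fderiv ℝ (⇑b) (L x)) (L x) :=
      ((hb1.differentiable one_ne_zero) (L x)).hasFDerivAt
    have h2 : fderiv ℝ (⇑b ∘ ⇑L) x = (fderiv ℝ (⇑b) (L x)).comp L :=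
      (h1.comp x L.hasFDerivAt).fderiv
    rw [h2]
    refine ContinuousLinearMap.opNorm_le_bound _ (by positivity) fun y => ?_
    rw [ContinuousLinearMap.comp_apply]
    calc ‖fderiv ℝ (⇑b) (L x) (L y)‖ ≤ ‖fderiv ℝ (⇑b) (L x)‖ * ‖L y‖ :=
          (fderiv ℝ (⇑b) (L x)).le_opNorm _
      _ ≤ M₀ * (R⁻¹ * ‖y‖) := by
          rw [hLnorm]
          exact mul_le_mul_of_nonneg_right (hM₀ _) (by positivity)
      _ ≤ max M₀ 0 / R * ‖y‖ := by
          rw [div_eq_mul_inv, mul_assoc]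
          exact mul_le_mul_of_nonneg_right (le_max_left _ _) (by positivity)

end Aux4


theorem superharmonic_integrable_gradient_norm_is_harmonic
    {n : ℕ} (hn : 1 ≤ n) (φ : EuclideanSpace ℝ (Fin n) → ℝ)
    (hC2 : ContDiff ℝ 2 φ)
    (hsuper : ∀ x, eLaplacian φ x ≤ 0)
    (hgrad : Integrable (fun x => ‖gradient φ x‖) volume) :
    ∀ x, eLaplacian φ x = 0 := by
  classical
  set e : Fin n → EuclideanSpace ℝ (Fin n) := fun i => EuclideanSpace.single i 1 with he
  set f : EuclideanSpace ℝ (Fin n) → ℝ := fun x => -eLaplacian φ x with hf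
  have hfnn : ∀ x, 0 ≤ f x := fun x => neg_nonneg.2 (hsuper x)
  have hΔcont : Continuous (eLaplacian φ) := by
    show Continuous fun x => ∑ i, iteratedFDeriv ℝ 2 φ x ![e i, e i]
    apply continuous_finset_sum
    intro i _
    exact (ContinuousMultilinearMap.apply ℝ _ ℝ ![e i, e i]).continuous.comp
      (hC2.continuous_iteratedFDeriv (m := 2) (by exact_mod_cast le_rfl))
  have hfc : Continuous f := hΔcont.neg
  obtain ⟨M, hM0, hcut⟩ := exists_cutoff (n := n)
  set I := ∫ x, ‖gradient φ x‖ with hI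
  have hI0 : 0 ≤ I := integral_nonneg (fun x => norm_nonneg _)
  have hball : ∀ r : ℝ,
      ∫ x in Metric.closedBall (0 : EuclideanSpace ℝ (Fin n)) r, f x ≤ 0 := by
    intro r
    have hfint : IntegrableOn f (Metric.closedBall (0 : EuclideanSpace ℝ (Fin n)) r) :=
      hfc.continuousOn.integrableOn_compact (isCompact_closedBall _ _)
    have key : ∀ R : ℝ, max r 1 ≤ R →
        ∫ x in Metric.closedBall (0 : EuclideanSpace ℝ (Fin n)) r, f x
          ≤ n * M * I / R := by
      intro R hRge
      have hR1 : (1:ℝ) ≤ R := le_trans (le_max_right _ _) hRge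
      have hR0 : (0:ℝ) < R := lt_of_lt_of_le one_pos hR1
      have hrR : r ≤ R := le_trans (le_max_left _ _) hRge
      obtain ⟨ψ, hψ1, hψc, hψnn, hψone, hψd⟩ := hcut R hR1
      have hψf_int : Integrable (fun x => ψ x * f x) volume :=
        (hψ1.continuous.mul hfc).integrable_of_hasCompactSupport hψc.mul_right
      have step1 : ∫ x in Metric.closedBall (0 : EuclideanSpace ℝ (Fin n)) r, f x
          ≤ ∫ x, ψ x * f x := by
        rw [← integral_indicator measurableSet_closedBall]
        apply integral_mono
          ((integrable_indicator_iff measurableSet_closedBall).2 hfint) hψf_int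
        intro x
        by_cases hx : x ∈ Metric.closedBall (0 : EuclideanSpace ℝ (Fin n)) r
        · have h1 : ψ x = 1 := hψone x (Metric.closedBall_subset_closedBall hrR hx)
          simp only [Set.indicator_of_mem hx, h1, one_mul]
          exact le_rfl
        · simp only [Set.indicator_of_notMem hx]
          exact mul_nonneg (hψnn x) (hfnn x)
      have hibp := ibp φ ψ hC2 hψ1 hψc
      have step2 : ∫ x, ψ x * f x =
          ∑ i, ∫ x, fderiv ℝ ψ x (e i) * fderiv ℝ φ x (e i) := by
        have h1 : ∫ x, ψ x * f x = -∫ x, ψ x * eLaplacian φ x := by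
          rw [← integral_neg]
          congr 1 with x
          simp [hf]
        rw [h1, hibp, neg_neg]
      have step3 : ∑ i, ∫ x, fderiv ℝ ψ x (e i) * fderiv ℝ φ x (e i)
          ≤ n * M * I / R := by
        have hterm : ∀ i : Fin n, ∫ x, fderiv ℝ ψ x (e i) * fderiv ℝ φ x (e i)
            ≤ M / R * I := by
          intro i
          have hb : ‖∫ x, fderiv ℝ ψ x (e i) * fderiv ℝ φ x (e i)‖
              ≤ ∫ x, M / R * ‖gradient φ x‖ := by
            apply norm_integral_le_of_norm_le (hgrad.const_mul (M / R))
            apply Filter.Eventually.of_forall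
            intro x
            rw [Real.norm_eq_abs, abs_mul]
            apply mul_le_mul ?_ (abs_fderiv_single_le φ x i) (abs_nonneg _)
              (by positivity)
            calc |fderiv ℝ ψ x (e i)| ≤ ‖gradient ψ x‖ := abs_fderiv_single_le ψ x i
              _ = ‖fderiv ℝ ψ x‖ := norm_gradient_eq ψ x
              _ ≤ M / R := hψd x
          rw [integral_const_mul] at hb
          exact le_trans (le_abs_self _) hb
        calc ∑ i, ∫ x, fderiv ℝ ψ x (e i) * fderiv ℝ φ x (e i)
            ≤ ∑ _i : Fin n, M / R * I := Finset.sum_le_sum fun i _ => hterm i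
          _ = n * (M / R * I) := by
              rw [Finset.sum_const, Finset.card_univ, Fintype.card_fin, nsmul_eq_mul]
          _ = n * M * I / R := by ring
      calc ∫ x in Metric.closedBall (0 : EuclideanSpace ℝ (Fin n)) r, f x
          ≤ ∫ x, ψ x * f x := step1
        _ = ∑ i, ∫ x, fderiv ℝ ψ x (e i) * fderiv ℝ φ x (e i) := step2
        _ ≤ n * M * I / R := step3
    have htend : Filter.Tendsto (fun R : ℝ => n * M * I / R) Filter.atTop (nhds 0) :=
      Filter.Tendsto.div_atTop tendsto_const_nhds Filter.tendsto_id
    exact ge_of_tendsto htend (Filter.eventually_atTop.2 ⟨max r 1, key⟩)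
  intro x₀
  by_contra hne
  have hpos : 0 < f x₀ :=
    lt_of_le_of_ne (hfnn x₀) fun h => hne (by simpa [hf, eq_comm, neg_eq_zero] using h)
  set r : ℝ := ‖x₀‖ + 1 with hr
  have hint : IntegrableOn f (Metric.closedBall (0 : EuclideanSpace ℝ (Fin n)) r) :=
    hfc.continuousOn.integrableOn_compact (isCompact_closedBall _ _)
  have h2 : 0 < ∫ x in Metric.closedBall (0 : EuclideanSpace ℝ (Fin n)) r, f x := by
    rw [setIntegral_pos_iff_support_of_nonneg_ae
      (Filter.Eventually.of_forall hfnn) hint]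
    have hU : IsOpen (f ⁻¹' Set.Ioi 0 ∩ Metric.ball (0 : EuclideanSpace ℝ (Fin n)) r) :=
      (isOpen_Ioi.preimage hfc).inter Metric.isOpen_ball
    have hx₀U : x₀ ∈ f ⁻¹' Set.Ioi 0 ∩ Metric.ball (0 : EuclideanSpace ℝ (Fin n)) r := by
      constructor
      · exact hpos
      · simp only [Metric.mem_ball, dist_zero_right, hr]
        linarith
    calc (0:ENNReal)
        < volume (f ⁻¹' Set.Ioi 0 ∩ Metric.ball (0 : EuclideanSpace ℝ (Fin n)) r) :=
          hU.measure_pos volume ⟨x₀, hx₀U⟩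
      _ ≤ volume (Function.support f ∩
            Metric.closedBall (0 : EuclideanSpace ℝ (Fin n)) r) := by
          apply measure_mono
          apply Set.inter_subset_inter
          · intro x hx
            exact ne_of_gt hx
          · exact Metric.ball_subset_closedBall
  exact absurd (lt_of_lt_of_le h2 (hball r)) (lt_irrefl 0)
end

section
/- Let n ≥ 1 and let u : EuclideanSpace ℝ (Fin n) → ℝ be a C² function which is subharmonic, i.e. Δu(x) ≥ 0 for all x, and such that the function x ↦ ‖∇u(x)‖ is integrable with respect to Lebesgue measure. Then u is harmonic, i.e. Δu(x) = 0 for all x. -/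
open MeasureTheory

set_option maxHeartbeats 2000000 in
theorem subharmonic_integrable_gradient_norm_is_harmonic
    {n : ℕ} (hn : 1 ≤ n) (u : EuclideanSpace ℝ (Fin n) → ℝ)
    (hC2 : ContDiff ℝ 2 u)
    (hsub : ∀ x, 0 ≤ eLaplacian u x)
    (hgrad : Integrable (fun x => ‖gradient u x‖) volume) :
    ∀ x, eLaplacian u x = 0 := by
  obtain ⟨m, rfl⟩ : ∃ m, n = m + 1 := ⟨n - 1, (Nat.succ_pred_eq_of_pos hn).symm⟩
  intro x₀
  refine le_antisymm ?_ (hsub x₀)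
  by_contra hlt
  push_neg at hlt
  -- identification of `Fin (m+1) → ℝ` with the Euclidean space
  set L : (Fin (m + 1) → ℝ) ≃L[ℝ] EuclideanSpace ℝ (Fin (m + 1)) :=
    (EuclideanSpace.equiv (Fin (m + 1)) ℝ).symm with hLdef
  set g := fderiv ℝ u with hgdef
  have hg1 : ContDiff ℝ 1 g := hC2.fderiv_right (by norm_num)
  have hgc : Continuous g := hg1.continuous
  set g' := fderiv ℝ g with hg'def
  have hg'c : Continuous g' := hg1.continuous_fderiv one_ne_zero
  have hgd : ∀ z, HasFDerivAt g (g' z) z := fun z => (hg1.differentiable one_ne_zero z).hasFDerivAt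
  set v : Fin (m + 1) → EuclideanSpace ℝ (Fin (m + 1)) :=
    fun i => EuclideanSpace.single i (1 : ℝ) with hv
  have hLsingle : ∀ i, L (Pi.single i (1 : ℝ)) = v i := fun i => rfl
  set f : Fin (m + 1) → (Fin (m + 1) → ℝ) → ℝ :=
    fun i y => ContinuousLinearMap.apply ℝ ℝ (v i) (g (L y)) with hfdef
  set f' : Fin (m + 1) → (Fin (m + 1) → ℝ) → (Fin (m + 1) → ℝ) →L[ℝ] ℝ :=
    fun i y => (ContinuousLinearMap.apply ℝ ℝ (v i)).comp
      ((g' (L y)).comp (L : (Fin (m + 1) → ℝ) →L[ℝ] EuclideanSpace ℝ (Fin (m + 1)))) with hf'def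
  have hfd : ∀ i y, HasFDerivAt (f i) (f' i y) y := by
    intro i y
    exact (ContinuousLinearMap.apply ℝ ℝ (v i)).hasFDerivAt.comp y
      ((hgd (L y)).comp y L.hasFDerivAt)
  have hfc : ∀ i, Continuous (f i) := fun i =>
    (ContinuousLinearMap.apply ℝ ℝ (v i)).continuous.comp (hgc.comp L.continuous)
  set Δ : (Fin (m + 1) → ℝ) → ℝ := fun y => eLaplacian u (L y) with hΔdef
  have hdiv : ∀ y, (∑ i, f' i y (Pi.single i 1)) = Δ y := by
    intro y
    simp only [hΔdef, eLaplacian]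
    refine Finset.sum_congr rfl fun i _ => ?_
    rw [iteratedFDeriv_two_apply]
    simp only [hf'def, ContinuousLinearMap.comp_apply, ContinuousLinearMap.apply_apply,
      ContinuousLinearEquiv.coe_coe, hLsingle i, Matrix.cons_val_zero, Matrix.cons_val_one,
      Matrix.head_cons, ← hgdef, ← hg'def]
    rfl
  have hΔc : Continuous Δ := by
    have h : Continuous fun y => ∑ i, f' i y (Pi.single i 1) := by
      refine continuous_finset_sum _ fun i _ => ?_
      simp only [hf'def, ContinuousLinearMap.comp_apply, ContinuousLinearMap.apply_apply,
        ContinuousLinearEquiv.coe_coe]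
      exact ((hg'c.comp L.continuous).clm_apply continuous_const).clm_apply continuous_const
    rwa [funext hdiv] at h
  have hΔ0 : ∀ y, 0 ≤ Δ y := fun y => hsub (L y)
  set z₀ : Fin (m + 1) → ℝ := L.symm x₀ with hz₀def
  have hz₀ : L z₀ = x₀ := L.apply_symm_apply x₀
  have hΔz₀ : 0 < Δ z₀ := by simpa [hΔdef, hz₀] using hlt
  -- a ball on which Δ is at least Δ z₀ / 2
  obtain ⟨δ, hδpos, hδ⟩ : ∃ δ > 0, ∀ y ∈ Metric.closedBall z₀ δ, Δ z₀ / 2 ≤ Δ y := by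
    have h1 : ∀ᶠ y in nhds z₀, Δ z₀ / 2 < Δ y :=
      (hΔc.tendsto z₀).eventually (eventually_gt_nhds (by linarith))
    rcases Metric.eventually_nhds_iff_ball.1 h1 with ⟨ε, hε, hball⟩
    exact ⟨ε / 2, by linarith, fun y hy =>
      (hball y (lt_of_le_of_lt (Metric.mem_closedBall.1 hy) (by linarith))).le⟩
  set m₀ : ℝ := Δ z₀ / 2 * (volume (Metric.closedBall z₀ δ)).toReal with hm₀def
  have hm₀ : 0 < m₀ := by
    apply mul_pos (by linarith)
    exact ENNReal.toReal_pos (ne_of_gt (Metric.measure_closedBall_pos volume z₀ hδpos))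
      (measure_closedBall_lt_top).ne
  set R₀ : ℝ := ‖z₀‖ + δ + 1 with hR₀def
  have hR₀pos : 0 < R₀ := by positivity
  -- boxes
  set A : ℝ → (Fin (m + 1) → ℝ) := fun R _ => -R with hAdef
  set B : ℝ → (Fin (m + 1) → ℝ) := fun R _ => R with hBdef
  have hIccInt : ∀ R : ℝ, IntegrableOn Δ (Set.Icc (A R) (B R)) volume := fun R =>
    hΔc.continuousOn.integrableOn_compact isCompact_Icc
  have hball_sub : ∀ R, R₀ ≤ R → Metric.closedBall z₀ δ ⊆ Set.Icc (A R) (B R) := by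
    intro R hR y hy
    have hy' : ‖y‖ ≤ ‖z₀‖ + δ := by
      have := Metric.mem_closedBall.1 hy
      calc ‖y‖ = ‖z₀ + (y - z₀)‖ := by ring_nf
        _ ≤ ‖z₀‖ + ‖y - z₀‖ := norm_add_le _ _
        _ ≤ ‖z₀‖ + δ := by
            rw [← dist_eq_norm]
            exact add_le_add_right this _
    constructor <;> intro j <;>
    · have hj : |y j| ≤ ‖y‖ := norm_le_pi_norm y j
      rw [abs_le] at hj
      simp only [hAdef, hBdef]
      have : ‖y‖ ≤ R := by simp only [hR₀def] at hR; linarith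
      linarith [hj.1, hj.2]
  -- lower bound on the box integral
  have hIlower : ∀ R, R₀ ≤ R → m₀ ≤ ∫ y in Set.Icc (A R) (B R), Δ y := by
    intro R hR
    have hcbInt : IntegrableOn Δ (Metric.closedBall z₀ δ) volume :=
      hΔc.continuousOn.integrableOn_compact (isCompact_closedBall _ _)
    have h2 : m₀ ≤ ∫ y in Metric.closedBall z₀ δ, Δ y := by
      have hle := setIntegral_mono_on
        (integrableOn_const measure_closedBall_lt_top.ne)
        hcbInt measurableSet_closedBall (fun y hy => hδ y hy)
      rw [setIntegral_const] at hle
      calc m₀ = (volume (Metric.closedBall z₀ δ)).toReal • (Δ z₀ / 2) := by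
            rw [smul_eq_mul, mul_comm, hm₀def]
        _ ≤ _ := hle
    refine h2.trans (setIntegral_mono_set (hIccInt R) ?_ ?_)
    · exact Filter.Eventually.of_forall fun y => hΔ0 y
    · exact HasSubset.Subset.eventuallyLE (hball_sub R hR)
  -- the face boxes
  set S : ℝ → Set (Fin m → ℝ) := fun R => Set.Icc (fun _ => -R) (fun _ => R) with hSdef
  -- divergence theorem
  have hdivthm : ∀ R, R₀ ≤ R →
      (∫ y in Set.Icc (A R) (B R), Δ y) =
        ∑ i, ((∫ y in S R, f i (i.insertNth R y)) - ∫ y in S R, f i (i.insertNth (-R) y)) := by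
    intro R hR
    have hAB : A R ≤ B R := by
      intro j; simp only [hAdef, hBdef]; linarith
    have h := integral_divergence_of_hasFDerivAt_off_countable' (A R) (B R) hAB f f'
      ∅ Set.countable_empty (fun i => (hfc i).continuousOn)
      (fun x _ i => hfd i x)
      (by
        have := hIccInt R
        simp only [hdiv]
        exact this)
    rw [← funext hdiv]
    exact h
  -- norm of the gradient, transferred to the pi space
  set N : (Fin (m + 1) → ℝ) → ℝ := fun y => ‖gradient u (L y)‖ with hNdef
  have hgradc : Continuous fun z : EuclideanSpace ℝ (Fin (m + 1)) => gradient u z := by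
    have : (fun z : EuclideanSpace ℝ (Fin (m + 1)) => gradient u z) =
        fun z => (InnerProductSpace.toDual ℝ _).symm (g z) := rfl
    rw [this]
    exact (LinearIsometryEquiv.continuous _).comp hgc
  have hNc : Continuous N := (hgradc.comp L.continuous).norm
  have hfN : ∀ i y, |f i y| ≤ N y := by
    intro i y
    have h2 : ‖v i‖ = 1 := by simp [hv, EuclideanSpace.norm_single]
    have h3 : ‖gradient u (L y)‖ = ‖g (L y)‖ := by
      unfold gradient
      rw [hgdef]
      exact LinearIsometryEquiv.norm_map
        (InnerProductSpace.toDual ℝ (EuclideanSpace ℝ (Fin (m + 1)))).symm _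
    calc |f i y| = ‖g (L y) (v i)‖ := by
          simp [hfdef, ContinuousLinearMap.apply_apply, Real.norm_eq_abs]
      _ ≤ ‖g (L y)‖ * ‖v i‖ := (g (L y)).le_opNorm _
      _ = N y := by rw [h2, mul_one]; simp only [hNdef]; exact h3.symm
  -- finiteness of the total gradient integral on the pi space
  set K : ENNReal := ∫⁻ y, ENNReal.ofReal (N y) with hKdef
  have hNmeas : Measurable fun y => ENNReal.ofReal (N y) := hNc.measurable.ennreal_ofReal
  have hK : K < ⊤ := by
    have h1 : ∫⁻ x, ENNReal.ofReal ‖gradient u x‖ ∂(volume :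
        Measure (EuclideanSpace ℝ (Fin (m + 1)))) < ⊤ := hgrad.lintegral_lt_top
    have hmp := (EuclideanSpace.volume_preserving_symm_measurableEquiv_toLp (Fin (m + 1))).symm
    have h2 := hmp.lintegral_comp
      (f := fun x => ENNReal.ofReal ‖gradient u x‖) (hgradc.norm.measurable.ennreal_ofReal)
    have h3 : ∀ y : Fin (m + 1) → ℝ,
        (MeasurableEquiv.toLp 2 (Fin (m + 1) → ℝ)) y = L y := fun y => rfl
    rw [hKdef]
    simp only [hNdef]
    calc ∫⁻ y, ENNReal.ofReal ‖gradient u (L y)‖ =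
        ∫⁻ y, ENNReal.ofReal ‖gradient u ((MeasurableEquiv.toLp 2 (Fin (m + 1) → ℝ)) y)‖ := by
          simp only [h3]
      _ = ∫⁻ x, ENNReal.ofReal ‖gradient u x‖ ∂volume := h2
      _ < ⊤ := h1
    -- insertion maps
  have hinsc : ∀ i : Fin (m + 1), Continuous fun p : ℝ × (Fin m → ℝ) => i.insertNth (α := fun _ => ℝ) p.1 p.2 :=
    fun i => Continuous.finInsertNth (A := fun _ : Fin (m+1) => ℝ) i continuous_fst continuous_snd
  have hmpins : ∀ i : Fin (m + 1),
      MeasurePreserving (fun p : ℝ × (Fin m → ℝ) => i.insertNth p.1 p.2)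
        (volume : Measure (ℝ × (Fin m → ℝ))) (volume : Measure (Fin (m + 1) → ℝ)) := by
    intro i
    have h := (measurePreserving_piFinSuccAbove
      (fun _ : Fin (m + 1) => (volume : Measure ℝ)) i).symm
    have heq : (fun p : ℝ × (Fin m → ℝ) => i.insertNth p.1 p.2) =
        ⇑(MeasurableEquiv.piFinSuccAbove (fun _ : Fin (m + 1) => ℝ) i).symm := by
      funext p
      simp [MeasurableEquiv.piFinSuccAbove_symm_apply, Fin.insertNthEquiv]
    rw [heq]
    exact h
  have hN0 : ∀ y, 0 ≤ N y := fun y => by simp only [hNdef]; positivity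
  -- Tonelli
  have hTon : ∀ i : Fin (m + 1),
      (∫⁻ t : ℝ, ∫⁻ y : Fin m → ℝ, ENNReal.ofReal (N (i.insertNth t y))) = K := by
    intro i
    rw [hKdef]
    have h1 := (hmpins i).lintegral_comp hNmeas
    rw [← h1, Measure.volume_eq_prod]
    exact (lintegral_prod _ ((hNmeas.comp (hinsc i).measurable).aemeasurable)).symm
  -- the indicator set
  set Q : Set (ℝ × (Fin m → ℝ)) := {p | ∀ j, |p.2 j| ≤ |p.1|} with hQdef
  have hQm : MeasurableSet Q := by
    have hQeq : Q = ⋂ j, {p : ℝ × (Fin m → ℝ) | |p.2 j| ≤ |p.1|} := by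
      ext p; simp [hQdef, Set.mem_iInter]
    rw [hQeq]
    exact MeasurableSet.iInter fun j =>
      measurableSet_le (((continuous_apply j).comp continuous_snd).abs.measurable)
        continuous_fst.abs.measurable
  set Ψ : Fin (m + 1) → ℝ → ENNReal := fun i t =>
    ∫⁻ y, Q.indicator
      (fun p : ℝ × (Fin m → ℝ) => ENNReal.ofReal (N (i.insertNth p.1 p.2))) (t, y) with hΨdef
  have hGm : ∀ i : Fin (m + 1), Measurable (Q.indicator
      (fun p : ℝ × (Fin m → ℝ) => ENNReal.ofReal (N (i.insertNth p.1 p.2)))) := fun i =>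
    (hNmeas.comp (hinsc i).measurable).indicator hQm
  have hΨmeas : ∀ i, Measurable (Ψ i) := fun i => Measurable.lintegral_prod_right' (hGm i)
  have hΨ_face : ∀ (i : Fin (m + 1)) (t : ℝ),
      (∫⁻ y in S |t|, ENNReal.ofReal (N (i.insertNth t y))) = Ψ i t := by
    intro i t
    rw [hΨdef, ← lintegral_indicator measurableSet_Icc]
    congr 1
    funext y
    have hmem : y ∈ S |t| ↔ (t, y) ∈ Q := by
      simp only [hSdef, Set.mem_Icc, hQdef, Set.mem_setOf_eq, Pi.le_def, abs_le]
      constructor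
      · rintro ⟨h1, h2⟩ j; exact ⟨h1 j, h2 j⟩
      · intro h; exact ⟨fun j => (h j).1, fun j => (h j).2⟩
    by_cases hy : y ∈ S |t|
    · rw [Set.indicator_of_mem hy, Set.indicator_of_mem (hmem.1 hy)]
    · rw [Set.indicator_of_notMem hy, Set.indicator_of_notMem (fun h => hy (hmem.2 h))]
  have hface : ∀ (i : Fin (m + 1)) (t : ℝ),
      ENNReal.ofReal |∫ y in S |t|, f i (i.insertNth t y)| ≤ Ψ i t := by
    intro i t
    have hcont1 : Continuous fun y : Fin m → ℝ => i.insertNth (α := fun _ => ℝ) t y :=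
      Continuous.finInsertNth (A := fun _ : Fin (m+1) => ℝ) i continuous_const continuous_id
    have hcomp : IsCompact (S |t|) := isCompact_Icc
    have hintN : IntegrableOn (fun y => N (i.insertNth t y)) (S |t|) volume :=
      ((hNc.comp hcont1).continuousOn).integrableOn_compact hcomp
    have hintf : IntegrableOn (fun y => |f i (i.insertNth t y)|) (S |t|) volume :=
      (((hfc i).comp hcont1).abs.continuousOn).integrableOn_compact hcomp
    have h1 : |∫ y in S |t|, f i (i.insertNth t y)| ≤ ∫ y in S |t|, |f i (i.insertNth t y)| := by
      simpa [Real.norm_eq_abs] using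
        norm_integral_le_integral_norm (μ := volume.restrict (S |t|))
          fun y => f i (i.insertNth t y)
    have h2 : (∫ y in S |t|, |f i (i.insertNth t y)|) ≤ ∫ y in S |t|, N (i.insertNth t y) :=
      setIntegral_mono_on hintf hintN measurableSet_Icc fun y _ => hfN i _
    calc ENNReal.ofReal |∫ y in S |t|, f i (i.insertNth t y)|
        ≤ ENNReal.ofReal (∫ y in S |t|, N (i.insertNth t y)) :=
          ENNReal.ofReal_le_ofReal (h1.trans h2)
      _ = ∫⁻ y in S |t|, ENNReal.ofReal (N (i.insertNth t y)) :=
          ofReal_integral_eq_lintegral_ofReal hintN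
            (Filter.Eventually.of_forall fun y => hN0 _)
      _ = Ψ i t := hΨ_face i t
  have hΨle : ∀ i, (∫⁻ t, Ψ i t) ≤ K := by
    intro i
    have h1 : ∀ t, Ψ i t ≤ ∫⁻ y, ENNReal.ofReal (N (i.insertNth t y)) := by
      intro t
      rw [hΨdef]
      exact lintegral_mono fun y => Set.indicator_le_self _ _ (t, y)
    calc (∫⁻ t, Ψ i t) ≤ ∫⁻ t, ∫⁻ y, ENNReal.ofReal (N (i.insertNth t y)) := lintegral_mono h1
      _ = K := hTon i
  -- put everything together
  set W : ℝ → ENNReal := fun t => ∑ i, (Ψ i t + Ψ i (-t)) with hWdef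
  have hWmeas : Measurable W := by
    apply Finset.measurable_sum
    intro i _
    exact (hΨmeas i).add ((hΨmeas i).comp measurable_neg)
  have hWlow : ∀ R ∈ Set.Ici R₀, ENNReal.ofReal m₀ ≤ W R := by
    intro R hR
    have hR' : R₀ ≤ R := hR
    have hRpos : 0 ≤ R := le_trans hR₀pos.le hR'
    have h1 : m₀ ≤ ∑ i, ((∫ y in S R, f i (i.insertNth R y)) -
        ∫ y in S R, f i (i.insertNth (-R) y)) := by
      rw [← hdivthm R hR']; exact hIlower R hR'
    have h2 : ENNReal.ofReal m₀ ≤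
        ∑ i, (ENNReal.ofReal |∫ y in S R, f i (i.insertNth R y)| +
              ENNReal.ofReal |∫ y in S R, f i (i.insertNth (-R) y)|) := by
      calc ENNReal.ofReal m₀
          ≤ ENNReal.ofReal (∑ i, (|∫ y in S R, f i (i.insertNth R y)| +
              |∫ y in S R, f i (i.insertNth (-R) y)|)) := by
            apply ENNReal.ofReal_le_ofReal
            refine h1.trans (Finset.sum_le_sum fun i _ => ?_)
            calc (∫ y in S R, f i (i.insertNth R y)) - ∫ y in S R, f i (i.insertNth (-R) y)
                ≤ |(∫ y in S R, f i (i.insertNth R y)) -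
                    ∫ y in S R, f i (i.insertNth (-R) y)| := le_abs_self _
              _ ≤ _ := abs_sub _ _
        _ = _ := by
            rw [ENNReal.ofReal_sum_of_nonneg fun i _ => by positivity]
            exact Finset.sum_congr rfl fun i _ =>
              ENNReal.ofReal_add (abs_nonneg _) (abs_nonneg _)
    refine h2.trans ?_
    rw [hWdef]
    refine Finset.sum_le_sum fun i _ => add_le_add ?_ ?_
    · have h := hface i R
      rwa [abs_of_nonneg hRpos] at h
    · have h := hface i (-R)
      rwa [abs_neg, abs_of_nonneg hRpos] at h
  have hIci : volume (Set.Ici R₀) = ⊤ := by simp [Real.volume_Ici]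
  have hTopLe : (⊤ : ENNReal) ≤ ∫⁻ t in Set.Ici R₀, W t := by
    have hconst : (∫⁻ _ in Set.Ici R₀, ENNReal.ofReal m₀) =
        ENNReal.ofReal m₀ * volume (Set.Ici R₀) := setLIntegral_const _ _
    have htop : (⊤ : ENNReal) = ENNReal.ofReal m₀ * volume (Set.Ici R₀) := by
      rw [hIci, ENNReal.mul_top (ENNReal.ofReal_pos.2 hm₀).ne']
    rw [htop, ← hconst]
    exact setLIntegral_mono hWmeas hWlow
  have hfin : (∫⁻ t in Set.Ici R₀, W t) < ⊤ := by
    have hle : (∫⁻ t in Set.Ici R₀, W t) ≤ ∫⁻ t, W t := setLIntegral_le_lintegral _ _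
    have hW : (∫⁻ t, W t) ≤ ∑ _i : Fin (m + 1), (K + K) := by
      rw [hWdef]
      rw [lintegral_finset_sum (f := fun i t => Ψ i t + Ψ i (-t)) _ fun i _ =>
        ((hΨmeas i).add ((hΨmeas i).comp measurable_neg) :
          Measurable fun t => Ψ i t + Ψ i (-t))]
      refine Finset.sum_le_sum fun i _ => ?_
      rw [lintegral_add_left (hΨmeas i)]
      refine add_le_add (hΨle i) ?_
      have hneg := (Measure.measurePreserving_neg (volume : Measure ℝ)).lintegral_comp (hΨmeas i)
      calc (∫⁻ t, Ψ i (-t)) = ∫⁻ t, Ψ i t := hneg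
        _ ≤ K := hΨle i
    refine lt_of_le_of_lt (hle.trans hW) ?_
    exact ENNReal.sum_lt_top.2 fun i _ => ENNReal.add_lt_top.2 ⟨hK, hK⟩
  exact absurd (hTopLe.trans_lt hfin) (lt_irrefl _)
end

section
/- Let n ≥ 3 and let σ : EuclideanSpace ℝ (Fin n) → ℝ be a C² function satisfying the pointwise inequality 2(n−1)·Δσ(x) + (n−1)(n−2)·‖∇σ(x)‖² ≤ 0 for all x, and suppose x ↦ ‖∇σ(x)‖ is integrable with respect to Lebesgue measure. Then σ is constant. -/
open MeasureTheory Metric Set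

/-- Integral of a directional derivative of a compactly supported `C¹` function vanishes. -/
lemma aux_integral_fderiv_eq_zero {n : ℕ} {g : EuclideanSpace ℝ (Fin n) → ℝ}
    (hg : ContDiff ℝ 1 g) (h'g : HasCompactSupport g) (v : EuclideanSpace ℝ (Fin n)) :
    ∫ x, fderiv ℝ g x v = 0 := by
  obtain ⟨D, hD⟩ := ContDiff.lipschitzWith_of_hasCompactSupport h'g hg one_ne_zero
  have h := LipschitzWith.integral_lineDeriv_mul_eq (μ := volume)
    (LipschitzWith.const (1:ℝ)) hD h'g (-v)
  have hconst : ∀ x : EuclideanSpace ℝ (Fin n),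
      lineDeriv ℝ (fun _ : EuclideanSpace ℝ (Fin n) => (1:ℝ)) x (-v) = 0 := fun x =>
    (differentiableAt_const (1:ℝ)).lineDeriv_eq_fderiv.trans (by simp)
  simp only [hconst, zero_mul, integral_zero, neg_neg, mul_one] at h
  have h2 : ∀ x : EuclideanSpace ℝ (Fin n), lineDeriv ℝ g x v = fderiv ℝ g x v := fun x =>
    (hg.differentiable one_ne_zero x).lineDeriv_eq_fderiv
  simp only [h2] at h
  exact h.symm

lemma aux_vec_decomp {n : ℕ} (y : EuclideanSpace ℝ (Fin n)) :
    y = ∑ i, y i • EuclideanSpace.single i 1 := by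
  ext j
  rw [show ((∑ i, y i • EuclideanSpace.single i 1 : EuclideanSpace ℝ (Fin n)) j)
    = ∑ i, (y i • EuclideanSpace.single i 1 : EuclideanSpace ℝ (Fin n)) j from
    by rw [WithLp.ofLp_sum, Finset.sum_apply]]
  simp [EuclideanSpace.single_apply]

set_option maxHeartbeats 1000000 in
theorem conformal_scalar_ineq_L1_gradient_constant
    {n : ℕ} (hn : 3 ≤ n) (σ : EuclideanSpace ℝ (Fin n) → ℝ)
    (hC2 : ContDiff ℝ 2 σ)
    (hineq : ∀ x, 2 * ((n : ℝ) - 1) * eLaplacian σ x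
      + ((n : ℝ) - 1) * ((n : ℝ) - 2) * ‖gradient σ x‖ ^ 2 ≤ 0)
    (hgrad : Integrable (fun x => ‖gradient σ x‖) volume) :
    ∃ c : ℝ, ∀ x, σ x = c := by
  set e : Fin n → EuclideanSpace ℝ (Fin n) := fun i => EuclideanSpace.single i 1 with he
  have hn3 : (3:ℝ) ≤ (n:ℝ) := by exact_mod_cast hn
  have hd1 : ContDiff ℝ 1 (fderiv ℝ σ) := hC2.fderiv_right (by norm_num)
  have hdσ : Differentiable ℝ σ := hC2.differentiable two_ne_zero
  -- gradient basics
  have hgradnorm : ∀ x, ‖gradient σ x‖ = ‖fderiv ℝ σ x‖ := fun x =>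
    LinearIsometryEquiv.norm_map _ _
  have hgradcont : Continuous fun x => gradient σ x := by
    exact (InnerProductSpace.toDual ℝ (EuclideanSpace ℝ (Fin n))).symm.continuous.comp (hC2.continuous_fderiv two_ne_zero)
  have hgc : ∀ (x : EuclideanSpace ℝ (Fin n)) (i : Fin n), gradient σ x i = fderiv ℝ σ x (e i) := by
    intro x i
    have h := InnerProductSpace.toDual_symm_apply (𝕜 := ℝ) (E := EuclideanSpace ℝ (Fin n))
      (y := fderiv ℝ σ x) (x := e i)
    rw [show gradient σ x = (InnerProductSpace.toDual ℝ (EuclideanSpace ℝ (Fin n))).symm (fderiv ℝ σ x) from rfl]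
    rw [← h, real_inner_comm, he]
    rw [EuclideanSpace.inner_single_left]
    simp
  have hrepr : ∀ (x : EuclideanSpace ℝ (Fin n)) (L : EuclideanSpace ℝ (Fin n) →L[ℝ] ℝ),
      L (gradient σ x) = ∑ i, fderiv ℝ σ x (e i) * L (e i) := by
    intro x L
    conv_lhs => rw [aux_vec_decomp (gradient σ x)]
    rw [map_sum]
    refine Finset.sum_congr rfl fun i _ => ?_
    rw [L.map_smul, hgc x i]
    rfl
  -- Laplacian as a sum of second derivatives
  have hVfd : ∀ (i : Fin n) (x : EuclideanSpace ℝ (Fin n)), fderiv ℝ (fun y => fderiv ℝ σ y (e i)) x =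
      (ContinuousLinearMap.apply ℝ ℝ (e i)).comp (fderiv ℝ (fderiv ℝ σ) x) := fun i x =>
    ((ContinuousLinearMap.apply ℝ ℝ (e i)).hasFDerivAt.comp x
      (hd1.differentiable one_ne_zero x).hasFDerivAt).fderiv
  have hlap : ∀ x, eLaplacian σ x = ∑ i, fderiv ℝ (fun y => fderiv ℝ σ y (e i)) x (e i) := by
    intro x
    unfold eLaplacian
    refine Finset.sum_congr rfl fun i _ => ?_
    rw [iteratedFDeriv_two_apply, hVfd]
    simp [he]
  have hVcd : ∀ i : Fin n, ContDiff ℝ 1 (fun y => fderiv ℝ σ y (e i)) := fun i =>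
    hd1.clm_apply contDiff_const
  have hlapcont : Continuous (eLaplacian σ) := by
    have : Continuous fun x => ∑ i, fderiv ℝ (fun y => fderiv ℝ σ y (e i)) x (e i) := by
      refine continuous_finset_sum _ fun i _ => ?_
      exact (((hVcd i).continuous_fderiv one_ne_zero).clm_apply continuous_const)
    exact (funext hlap : eLaplacian σ = _) ▸ this
  -- pointwise inequality
  have key0 : ∀ x, ((n:ℝ) - 2) / 2 * ‖gradient σ x‖ ^ 2 ≤ - eLaplacian σ x := by
    intro x
    have h1 := hineq x
    rw [← sub_nonneg]
    have h3 : -eLaplacian σ x - ((n:ℝ) - 2) / 2 * ‖gradient σ x‖ ^ 2 =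
        (-(2 * ((n:ℝ) - 1) * eLaplacian σ x
          + ((n:ℝ) - 1) * ((n:ℝ) - 2) * ‖gradient σ x‖ ^ 2)) / (2 * ((n:ℝ) - 1)) := by
      have hne : (2 : ℝ) * ((n:ℝ) - 1) ≠ 0 := by nlinarith
      rw [eq_div_iff hne]
      ring
    rw [h3]
    exact div_nonneg (by linarith) (by linarith)
  set c : ℝ := ((n:ℝ) - 2) / 2 with hc
  have hcpos : 0 < c := by rw [hc]; linarith
  -- the bump function and its scalings
  let f : ContDiffBump (0 : EuclideanSpace ℝ (Fin n)) := ⟨1, 2, one_pos, one_lt_two⟩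
  obtain ⟨C₀, hC₀⟩ := (f.hasCompactSupport.fderiv (𝕜 := ℝ)).exists_bound_of_continuous
    ((f.contDiff (n := 1)).continuous_fderiv one_ne_zero)
  set C : ℝ := max C₀ 0 with hCdef
  have hC : ∀ y, ‖fderiv ℝ (⇑f) y‖ ≤ C := fun y => (hC₀ y).trans (le_max_left _ _)
  have hCnn : 0 ≤ C := le_max_right _ _
  set I : ℝ := ∫ x, ‖gradient σ x‖ with hI
  -- main estimate
  have key : ∀ R : ℝ, 1 ≤ R →
      c * ∫ x in closedBall (0 : EuclideanSpace ℝ (Fin n)) R, ‖gradient σ x‖ ^ 2 ≤ C / R * I := by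
    intro R hR
    have hRpos : (0:ℝ) < R := lt_of_lt_of_le one_pos hR
    set φ : EuclideanSpace ℝ (Fin n) → ℝ := fun x => f (R⁻¹ • x) with hφ
    have hφcd : ContDiff ℝ 2 φ := (f.contDiff (n := 2)).comp (contDiff_id.const_smul R⁻¹)
    have hφsupp : HasCompactSupport φ := by
      refine HasCompactSupport.intro (isCompact_closedBall (0 : EuclideanSpace ℝ (Fin n)) (2*R)) fun x hx => ?_
      refine f.zero_of_le_dist ?_
      have hx' : 2 * R < ‖x‖ := by
        simpa [mem_closedBall, dist_zero_right] using hx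
      have : 2 < R⁻¹ * ‖x‖ := by
        rw [lt_inv_mul_iff₀ hRpos]
        linarith
      simpa [dist_zero_right, norm_smul, abs_of_pos hRpos] using this.le
    have hφ1 : ∀ x ∈ closedBall (0 : EuclideanSpace ℝ (Fin n)) R, φ x = 1 := by
      intro x hx
      refine f.one_of_mem_closedBall ?_
      have hx' : ‖x‖ ≤ R := by simpa [mem_closedBall, dist_zero_right] using hx
      have : R⁻¹ * ‖x‖ ≤ 1 := by
        rw [inv_mul_le_iff₀ hRpos]; linarith
      simpa [mem_closedBall, dist_zero_right, norm_smul,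
        abs_of_pos hRpos] using this
    have hφ0 : ∀ x, 0 ≤ φ x := fun x => f.nonneg
    have hφbound : ∀ x, ‖fderiv ℝ φ x‖ ≤ C / R := by
      intro x
      have hsm : HasFDerivAt (fun y : EuclideanSpace ℝ (Fin n) => R⁻¹ • y) (R⁻¹ • ContinuousLinearMap.id ℝ (EuclideanSpace ℝ (Fin n))) x :=
        (hasFDerivAt_id x).const_smul R⁻¹
      have hf' : HasFDerivAt (⇑f) (fderiv ℝ (⇑f) (R⁻¹ • x)) (R⁻¹ • x) :=
        (((f.contDiff (n := 1)).differentiable one_ne_zero) (R⁻¹ • x)).hasFDerivAt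
      have hcomp : HasFDerivAt φ
          ((fderiv ℝ (⇑f) (R⁻¹ • x)).comp (R⁻¹ • ContinuousLinearMap.id ℝ (EuclideanSpace ℝ (Fin n)))) x :=
        hf'.comp x hsm
      rw [hcomp.fderiv]
      calc ‖(fderiv ℝ (⇑f) (R⁻¹ • x)).comp (R⁻¹ • ContinuousLinearMap.id ℝ (EuclideanSpace ℝ (Fin n)))‖
          ≤ ‖fderiv ℝ (⇑f) (R⁻¹ • x)‖ * ‖R⁻¹ • ContinuousLinearMap.id ℝ (EuclideanSpace ℝ (Fin n))‖ :=
            ContinuousLinearMap.opNorm_comp_le _ _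
        _ ≤ C * R⁻¹ := by
            refine mul_le_mul (hC _) ?_ (norm_nonneg _) hCnn
            calc ‖R⁻¹ • ContinuousLinearMap.id ℝ (EuclideanSpace ℝ (Fin n))‖
                ≤ ‖R⁻¹‖ * ‖ContinuousLinearMap.id ℝ (EuclideanSpace ℝ (Fin n))‖ :=
                  ContinuousLinearMap.opNorm_smul_le _ _
              _ ≤ R⁻¹ * 1 := by
                  rw [Real.norm_eq_abs, abs_of_pos (inv_pos.mpr hRpos)]
                  exact mul_le_mul_of_nonneg_left ContinuousLinearMap.norm_id_le
                    (inv_pos.mpr hRpos).le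
              _ = R⁻¹ := mul_one _
        _ = C / R := by rw [div_eq_mul_inv]
    -- integration by parts
    have hIBP : ∀ i : Fin n,
        ∫ x, fderiv ℝ (fun y => φ y * fderiv ℝ σ y (e i)) x (e i) = 0 := fun i =>
      aux_integral_fderiv_eq_zero ((hφcd.of_le one_le_two).mul (hVcd i))
        (hφsupp.mul_right) (e i)
    have hprod : ∀ (i : Fin n) (x : EuclideanSpace ℝ (Fin n)),
        fderiv ℝ (fun y => φ y * fderiv ℝ σ y (e i)) x (e i)
          = φ x * fderiv ℝ (fun y => fderiv ℝ σ y (e i)) x (e i)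
            + fderiv ℝ σ x (e i) * fderiv ℝ φ x (e i) := by
      intro i x
      rw [fderiv_fun_mul (hφcd.differentiable two_ne_zero x) ((hVcd i).differentiable one_ne_zero x)]
      simp [mul_comm]
    -- integrability of the pieces
    have hAcont : Continuous fun x => fderiv ℝ φ x (gradient σ x) :=
      ((hφcd.continuous_fderiv two_ne_zero).clm_apply hgradcont)
    have hAsupp : HasCompactSupport fun x => fderiv ℝ φ x (gradient σ x) := by
      have hsub : Function.support (fun x => fderiv ℝ φ x (gradient σ x)) ⊆
          Function.support (fderiv ℝ φ) := by
        intro x hx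
        simp only [Function.mem_support, ne_eq] at hx ⊢
        intro h0
        exact hx (by rw [h0]; simp)
      exact (hφsupp.fderiv (𝕜 := ℝ)).mono' (hsub.trans subset_closure)
    have hAint : Integrable (fun x => fderiv ℝ φ x (gradient σ x)) volume :=
      hAcont.integrable_of_hasCompactSupport hAsupp
    have hBcont : Continuous fun x => φ x * eLaplacian σ x :=
      (hφcd.continuous).mul hlapcont
    have hBsupp : HasCompactSupport fun x => φ x * eLaplacian σ x := by
      have hsub : Function.support (fun x => φ x * eLaplacian σ x) ⊆
          Function.support φ := by
        intro x hx
        simp only [Function.mem_support, ne_eq] at hx ⊢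
        intro h0
        exact hx (by rw [h0, zero_mul])
      exact hφsupp.mono' (hsub.trans subset_closure)
    have hBint : Integrable (fun x => φ x * eLaplacian σ x) volume :=
      hBcont.integrable_of_hasCompactSupport hBsupp
    -- each IBP integrand is integrable
    have hterm_int : ∀ i : Fin n, Integrable
        (fun x => fderiv ℝ (fun y => φ y * fderiv ℝ σ y (e i)) x (e i)) volume := by
      intro i
      have hcd : ContDiff ℝ 1 (fun y => φ y * fderiv ℝ σ y (e i)) :=
        (hφcd.of_le one_le_two).mul (hVcd i)
      have hcs : HasCompactSupport (fun y => φ y * fderiv ℝ σ y (e i)) := hφsupp.mul_right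
      refine Continuous.integrable_of_hasCompactSupport
        ((hcd.continuous_fderiv one_ne_zero).clm_apply continuous_const) ?_
      exact (hcs.fderiv (𝕜 := ℝ)).comp_left (g := fun L : EuclideanSpace ℝ (Fin n) →L[ℝ] ℝ => L (e i)) rfl
    -- summing up
    have hsum : ∫ x, (fderiv ℝ φ x (gradient σ x) + φ x * eLaplacian σ x) = 0 := by
      have h1 : ∑ i, ∫ x, fderiv ℝ (fun y => φ y * fderiv ℝ σ y (e i)) x (e i) = 0 := by
        rw [Finset.sum_congr rfl fun i _ => hIBP i]; simp
      rw [← integral_finset_sum Finset.univ (fun i _ => hterm_int i)] at h1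
      rw [← h1]
      refine integral_congr_ae (Filter.Eventually.of_forall fun x => ?_)
      show fderiv ℝ φ x (gradient σ x) + φ x * eLaplacian σ x
        = ∑ i, fderiv ℝ (fun y => φ y * fderiv ℝ σ y (e i)) x (e i)
      rw [hlap x, hrepr x (fderiv ℝ φ x), Finset.mul_sum, ← Finset.sum_add_distrib]
      exact (Finset.sum_congr rfl fun i _ => by rw [hprod i x]; ring).symm
    have hsplit : ∫ x, φ x * (- eLaplacian σ x) = ∫ x, fderiv ℝ φ x (gradient σ x) := by
      have := integral_add hAint hBint
      rw [hsum] at this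
      have h2 : ∫ x, φ x * (- eLaplacian σ x) = - ∫ x, φ x * eLaplacian σ x := by
        rw [← integral_neg]; congr 1; ext x; ring
      rw [h2]; linarith
    -- lower bound for the left side
    have hIndInt : Integrable
        ((closedBall (0 : EuclideanSpace ℝ (Fin n)) R).indicator (fun x => c * ‖gradient σ x‖ ^ 2)) volume := by
      refine IntegrableOn.integrable_indicator ?_ measurableSet_closedBall
      exact (continuous_const.mul ((hgradcont.norm).pow 2)).continuousOn.integrableOn_compact
        (isCompact_closedBall _ _)
    have hlow : c * ∫ x in closedBall (0 : EuclideanSpace ℝ (Fin n)) R, ‖gradient σ x‖ ^ 2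
        ≤ ∫ x, φ x * (- eLaplacian σ x) := by
      have hmono : ∀ x, (closedBall (0 : EuclideanSpace ℝ (Fin n)) R).indicator (fun x => c * ‖gradient σ x‖ ^ 2) x
          ≤ φ x * (- eLaplacian σ x) := by
        intro x
        by_cases hx : x ∈ closedBall (0 : EuclideanSpace ℝ (Fin n)) R
        · rw [indicator_of_mem hx, hφ1 x hx, one_mul]
          exact key0 x
        · rw [indicator_of_notMem hx]
          exact mul_nonneg (hφ0 x) (le_trans (by positivity) (key0 x))
      have hBint' : Integrable (fun x => φ x * (- eLaplacian σ x)) volume :=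
        hBint.neg.congr (Filter.Eventually.of_forall fun x => by
          simp only [Pi.neg_apply]; ring)
      calc c * ∫ x in closedBall (0 : EuclideanSpace ℝ (Fin n)) R, ‖gradient σ x‖ ^ 2
          = ∫ x, (closedBall (0 : EuclideanSpace ℝ (Fin n)) R).indicator (fun x => c * ‖gradient σ x‖ ^ 2) x := by
            rw [integral_indicator measurableSet_closedBall, integral_const_mul]
        _ ≤ ∫ x, φ x * (- eLaplacian σ x) := integral_mono hIndInt hBint' hmono
    -- upper bound for the right side
    have hup : ∫ x, fderiv ℝ φ x (gradient σ x) ≤ C / R * I := by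
      have hmono : ∀ x, fderiv ℝ φ x (gradient σ x) ≤ C / R * ‖gradient σ x‖ := by
        intro x
        calc fderiv ℝ φ x (gradient σ x) ≤ ‖fderiv ℝ φ x (gradient σ x)‖ := le_abs_self _
          _ ≤ ‖fderiv ℝ φ x‖ * ‖gradient σ x‖ := (fderiv ℝ φ x).le_opNorm _
          _ ≤ C / R * ‖gradient σ x‖ :=
              mul_le_mul_of_nonneg_right (hφbound x) (norm_nonneg _)
      calc ∫ x, fderiv ℝ φ x (gradient σ x) ≤ ∫ x, C / R * ‖gradient σ x‖ :=
            integral_mono hAint (hgrad.const_mul _) hmono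
        _ = C / R * I := by rw [integral_const_mul]
    calc c * ∫ x in closedBall (0 : EuclideanSpace ℝ (Fin n)) R, ‖gradient σ x‖ ^ 2
        ≤ ∫ x, φ x * (- eLaplacian σ x) := hlow
      _ = ∫ x, fderiv ℝ φ x (gradient σ x) := hsplit
      _ ≤ C / R * I := hup
  -- the set integrals vanish
  have hIntOn : ∀ s : ℝ, IntegrableOn (fun x => ‖gradient σ x‖ ^ 2) (closedBall (0 : EuclideanSpace ℝ (Fin n)) s) :=
    fun s => ((hgradcont.norm).pow 2).continuousOn.integrableOn_compact (isCompact_closedBall _ _)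
  have hzero : ∀ r : ℝ, ∫ x in closedBall (0 : EuclideanSpace ℝ (Fin n)) r, ‖gradient σ x‖ ^ 2 = 0 := by
    intro r
    have hnn : 0 ≤ ∫ x in closedBall (0 : EuclideanSpace ℝ (Fin n)) r, ‖gradient σ x‖ ^ 2 :=
      setIntegral_nonneg measurableSet_closedBall (fun x _ => by positivity)
    have hle : ∀ R : ℝ, max r 1 ≤ R →
        c * ∫ x in closedBall (0 : EuclideanSpace ℝ (Fin n)) r, ‖gradient σ x‖ ^ 2 ≤ C / R * I := by
      intro R hR
      have hR1 : 1 ≤ R := le_trans (le_max_right _ _) hR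
      have h1 : ∫ x in closedBall (0 : EuclideanSpace ℝ (Fin n)) r, ‖gradient σ x‖ ^ 2
          ≤ ∫ x in closedBall (0 : EuclideanSpace ℝ (Fin n)) R, ‖gradient σ x‖ ^ 2 := by
        refine setIntegral_mono_set (hIntOn R)
          (Filter.Eventually.of_forall fun x => by positivity) ?_
        exact (closedBall_subset_closedBall (le_trans (le_max_left _ _) hR)).eventuallyLE
      exact le_trans (mul_le_mul_of_nonneg_left h1 hcpos.le) (key R hR1)
    have htend : Filter.Tendsto (fun R : ℝ => C / R * I) Filter.atTop (nhds 0) := by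
      have : Filter.Tendsto (fun R : ℝ => C * I / R) Filter.atTop (nhds 0) :=
        Filter.Tendsto.div_atTop tendsto_const_nhds Filter.tendsto_id
      refine this.congr fun R => by ring
    have hle0 : c * ∫ x in closedBall (0 : EuclideanSpace ℝ (Fin n)) r, ‖gradient σ x‖ ^ 2 ≤ 0 := by
      refine ge_of_tendsto htend ?_
      exact Filter.eventually_atTop.2 ⟨max r 1, hle⟩
    have hJle : ∫ x in closedBall (0 : EuclideanSpace ℝ (Fin n)) r, ‖gradient σ x‖ ^ 2 ≤ 0 := by
      by_contra hcon
      push_neg at hcon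
      nlinarith [mul_pos hcpos hcon]
    linarith
  -- gradient vanishes everywhere
  have hgrad0 : ∀ x : EuclideanSpace ℝ (Fin n), gradient σ x = 0 := by
    intro x₀
    by_contra hne
    have hpos : 0 < ‖gradient σ x₀‖ ^ 2 := pow_pos (norm_pos_iff.mpr hne) 2
    set r : ℝ := ‖x₀‖ + 1 with hr
    have hU : IsOpen ({x : EuclideanSpace ℝ (Fin n) | 0 < ‖gradient σ x‖ ^ 2} ∩ ball (0 : EuclideanSpace ℝ (Fin n)) r) :=
      (isOpen_lt continuous_const ((hgradcont.norm).pow 2)).inter isOpen_ball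
    have hx₀U : x₀ ∈ {x : EuclideanSpace ℝ (Fin n) | 0 < ‖gradient σ x‖ ^ 2} ∩ ball (0 : EuclideanSpace ℝ (Fin n)) r :=
      ⟨hpos, mem_ball_zero_iff.mpr (by rw [hr]; linarith)⟩
    have hμ : 0 < volume ({x : EuclideanSpace ℝ (Fin n) | 0 < ‖gradient σ x‖ ^ 2} ∩ ball (0 : EuclideanSpace ℝ (Fin n)) r) :=
      hU.measure_pos volume ⟨x₀, hx₀U⟩
    have hsub : {x : EuclideanSpace ℝ (Fin n) | 0 < ‖gradient σ x‖ ^ 2} ∩ ball (0 : EuclideanSpace ℝ (Fin n)) r ⊆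
        Function.support (fun x => ‖gradient σ x‖ ^ 2) ∩ closedBall (0 : EuclideanSpace ℝ (Fin n)) r := by
      rintro x ⟨h1, h2⟩
      exact ⟨ne_of_gt h1, ball_subset_closedBall h2⟩
    have hμ2 : 0 < volume (Function.support (fun x => ‖gradient σ x‖ ^ 2)
        ∩ closedBall (0 : EuclideanSpace ℝ (Fin n)) r) := lt_of_lt_of_le hμ (measure_mono hsub)
    have := (setIntegral_pos_iff_support_of_nonneg_ae
      (Filter.Eventually.of_forall fun x => by positivity) (hIntOn r)).2 hμ2
    rw [hzero r] at this
    exact lt_irrefl 0 this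
  have hfd0 : ∀ x : EuclideanSpace ℝ (Fin n), fderiv ℝ σ x = 0 := by
    intro x
    have h1 : ‖fderiv ℝ σ x‖ = 0 := by rw [← hgradnorm x, hgrad0 x, norm_zero]
    exact norm_eq_zero.mp h1
  exact ⟨σ 0, fun x => is_const_of_fderiv_eq_zero hdσ hfd0 x 0⟩
end

section
/- Let n ≥ 3 and let σ : EuclideanSpace ℝ (Fin n) → ℝ be a C² function with σ(x) ≤ 0 for all x, satisfying the pointwise inequality 2(n−1)·Δσ(x) + (n−1)(n−2)·‖∇σ(x)‖² ≤ 0 for all x, and suppose ∫ |σ|^p < ∞ for some real p with 1 < p < ∞. Then σ is identically zero. -/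
open MeasureTheory Set

local notation "E" n => EuclideanSpace ℝ (Fin n)

lemma abs_coord_le_norm {n : ℕ} (x : EuclideanSpace ℝ (Fin n)) (i : Fin n) : |x i| ≤ ‖x‖ := by
  have h := abs_real_inner_le_norm x (EuclideanSpace.single i (1:ℝ))
  simpa [EuclideanSpace.inner_single_right, EuclideanSpace.norm_single] using h

lemma my_div_zero {n : ℕ} (hn : n ≠ 0) (f : Fin n → (E n) → ℝ)
    (f' : Fin n → (E n) → ((E n) →L[ℝ] ℝ))
    (hd : ∀ i x, HasFDerivAt (f i) (f' i x) x)
    (hcont : ∀ i, Continuous fun x => f' i x (EuclideanSpace.single i 1))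
    (S : ℝ) (hS : 0 < S)
    (hsupp : ∀ i x, S ≤ ‖x‖ → f i x = 0) :
    ∫ x, ∑ i, f' i x (EuclideanSpace.single i 1) = 0 := by
  obtain ⟨k, rfl⟩ := Nat.exists_eq_succ_of_ne_zero hn
  set L : ℝ := S + 1 with hL
  have hSL : S < L := by simp [hL]
  -- f' vanishes outside ball S
  have hf'0 : ∀ i x, S < ‖x‖ → f' i x = 0 := by
    intro i x hx
    have hev : f i =ᶠ[nhds x] (fun _ => (0:ℝ)) := by
      have hopen : IsOpen {y : E (k+1) | S < ‖y‖} := isOpen_lt continuous_const continuous_norm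
      filter_upwards [hopen.mem_nhds hx] with y hy
      exact hsupp i y hy.le
    have h0 : HasFDerivAt (f i) (0 : (E (k+1)) →L[ℝ] ℝ) x :=
      (hasFDerivAt_const (0:ℝ) x).congr_of_eventuallyEq hev
    exact (hd i x).unique h0
  set div : (E (k+1)) → ℝ := fun x => ∑ i, f' i x (EuclideanSpace.single i 1) with hdiv
  have hdivcont : Continuous div := continuous_finset_sum _ fun i _ => hcont i
  set a : Fin (k+1) → ℝ := fun _ => -L
  set b : Fin (k+1) → ℝ := fun _ => L
  set eqv := (MeasurableEquiv.toLp 2 (Fin (k+1) → ℝ)).symm with heqv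
  have hdiv0 : ∀ x ∉ (⇑eqv) ⁻¹' (Icc a b), div x = 0 := by
    intro x hx
    have hex : ∃ i, L < |eqv x i| := by
      by_contra hcon
      push_neg at hcon
      apply hx
      simp only [Set.mem_preimage, Set.mem_Icc, Pi.le_def]
      refine ⟨fun i => ?_, fun i => ?_⟩
      · have := abs_le.mp (hcon i)
        simpa [a] using this.1
      · have := abs_le.mp (hcon i)
        simpa [b] using this.2
    obtain ⟨i, hi⟩ := hex
    have hxi : |x i| = |eqv x i| := rfl
    have hnorm : S < ‖x‖ := by
      calc S < L := hSL
        _ < |x i| := by rw [hxi]; exact hi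
        _ ≤ ‖x‖ := abs_coord_le_norm x i
    have : ∀ i', f' i' x = 0 := fun i' => hf'0 i' x hnorm
    simp [hdiv, this]
  have hle : a ≤ b := fun i => by simp [a, b]; nlinarith
  set M : ((Fin (k+1) → ℝ)) →L[ℝ] (E (k+1)) :=
    ((EuclideanSpace.equiv (Fin (k+1)) ℝ).symm : (Fin (k+1) → ℝ) ≃L[ℝ] E (k+1)).toContinuousLinearMap with hM
  set g : Fin (k+1) → (Fin (k+1) → ℝ) → ℝ := fun i y => f i (M y) with hg
  set g' : Fin (k+1) → (Fin (k+1) → ℝ) → ((Fin (k+1) → ℝ) →L[ℝ] ℝ) :=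
    fun i y => (f' i (M y)).comp M with hg'
  have hMsingle : ∀ i : Fin (k+1), M (Pi.single i 1) = EuclideanSpace.single i 1 := fun i => rfl
  have hfc : ∀ i, Continuous (f i) := by
    intro i
    rw [continuous_iff_continuousAt]
    exact fun x => (hd i x).continuousAt
  have hdivg : ∀ y, (∑ i, g' i y (Pi.single i 1)) = div (M y) := by
    intro y
    simp only [hg', hdiv, ContinuousLinearMap.comp_apply, hMsingle]
  have hdivthm := integral_divergence_of_hasFDerivAt_off_countable' a b hle g g' ∅
    Set.countable_empty
    (fun i => ((hfc i).comp M.continuous).continuousOn)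
    (fun x _ i => HasFDerivAt.comp x (hd i (M x)) (M.hasFDerivAt))
    (by
      apply ContinuousOn.integrableOn_compact isCompact_Icc
      exact (continuous_finset_sum Finset.univ fun i _ =>
        ((hcont i).comp M.continuous : Continuous fun y => f' i (M y) (EuclideanSpace.single i 1))).continuousOn)
  have hfaces : ∀ (i : Fin (k+1)) (c : ℝ), |c| = L →
      ∀ (x : Fin k → ℝ), g i (i.insertNth c x) = 0 := by
    intro i c hc x
    apply hsupp
    have hMa : ∀ (y : Fin (k+1) → ℝ) (j : Fin (k+1)), (M y) j = y j := fun y j => rfl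
    have h1 : |(M (i.insertNth c x)) i| = |c| := by
      rw [hMa, Fin.insertNth_apply_same]
    calc S ≤ L := hSL.le
      _ = |(M (i.insertNth c x)) i| := by rw [h1, hc]
      _ ≤ ‖M (i.insertNth c x)‖ := abs_coord_le_norm _ i
  have hzero : ∑ i : Fin (k+1),
      ((∫ (x : Fin k → ℝ) in Icc (a ∘ i.succAbove) (b ∘ i.succAbove), g i (i.insertNth (b i) x)) -
        ∫ (x : Fin k → ℝ) in Icc (a ∘ i.succAbove) (b ∘ i.succAbove), g i (i.insertNth (a i) x)) = 0 := by
    apply Finset.sum_eq_zero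
    intro i _
    have hb : ∀ x, g i (i.insertNth (b i) x) = 0 :=
      hfaces i (b i) (by show |L| = L; rw [abs_of_pos (by nlinarith)]) 
    have ha : ∀ x, g i (i.insertNth (a i) x) = 0 :=
      hfaces i (a i) (by show |(-L)| = L; rw [abs_neg, abs_of_pos (by nlinarith)]) 
    simp [hb, ha]
  have h1 : ∫ x, div x = ∫ x in (⇑eqv) ⁻¹' (Icc a b), div x :=
    (setIntegral_eq_integral_of_forall_compl_eq_zero hdiv0).symm
  have h2 : ∫ x in (⇑eqv) ⁻¹' (Icc a b), div x = ∫ y in Icc a b, div (M y) := by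
    have := (EuclideanSpace.volume_preserving_symm_measurableEquiv_toLp (Fin (k+1))).setIntegral_preimage_emb
      eqv.measurableEmbedding (fun y => div (M y)) (Icc a b)
    exact this
  have h3 : ∫ y in Icc a b, div (M y) = 0 := by
    rw [show (fun y => div (M y)) = fun y => ∑ i, g' i y (Pi.single i 1) from funext fun y => (hdivg y).symm]
    rw [hdivthm, hzero]
  rw [h1, h2, h3]


set_option maxHeartbeats 2000000 in
lemma const_of_subharmonic {n : ℕ} (hn : n ≠ 0) (v : (E n) → ℝ) (hv : ContDiff ℝ 2 v)
    (hvnn : ∀ x, 0 ≤ v x)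
    (hΔ : ∀ x, 0 ≤ ∑ i, fderiv ℝ (fderiv ℝ v) x (EuclideanSpace.single i 1)
      (EuclideanSpace.single i 1))
    (hint : Integrable (fun x => (v x)^2) volume) :
    ∀ x y, v x = v y := by
  have hv1 : Differentiable ℝ v := hv.differentiable two_ne_zero
  have hDv : ContDiff ℝ 1 (fderiv ℝ v) := hv.fderiv_right (by norm_num)
  have hDvd : Differentiable ℝ (fderiv ℝ v) := hDv.differentiable one_ne_zero
  have hDvc : Continuous (fderiv ℝ v) := hDvd.continuous
  have hD2vc : Continuous (fderiv ℝ (fderiv ℝ v)) := hDv.continuous_fderiv one_ne_zero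
  set bb : Fin n → E n := fun i => EuclideanSpace.single i 1 with hbb
  set Q : (E n) → ℝ := fun x => ∑ i, (fderiv ℝ v x (bb i))^2 with hQdef
  have hQc : Continuous Q := by
    apply continuous_finset_sum; intro i _
    exact ((ContinuousLinearMap.apply ℝ ℝ (bb i)).continuous.comp hDvc).pow 2
  have hQnn : ∀ x, 0 ≤ Q x := fun x => Finset.sum_nonneg fun i _ => sq_nonneg _
  have hintnn : 0 ≤ ∫ x, (v x)^2 := integral_nonneg fun x => sq_nonneg _
  -- bump function
  set ψ : ContDiffBump (0 : E n) := ⟨1, 2, one_pos, one_lt_two⟩ with hψdef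
  have hψc : Continuous ψ := ψ.continuous
  have hψd : Differentiable ℝ (ψ : EuclideanSpace ℝ (Fin n) → ℝ) := (ψ.contDiff (n := 1)).differentiable (by norm_num)
  have hDψc : Continuous (fderiv ℝ (ψ : EuclideanSpace ℝ (Fin n) → ℝ)) :=
    (ψ.contDiff (n := 2)).continuous_fderiv (by norm_num)
  obtain ⟨K, hK⟩ := ((ψ.hasCompactSupport).fderiv (𝕜 := ℝ)).exists_bound_of_continuous hDψc
  have hK0 : 0 ≤ K := le_trans (norm_nonneg _) (hK 0)
  set A : ℝ := 2 * (n:ℝ) * K^2 * ∫ x, (v x)^2 with hA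
  have hA0 : 0 ≤ A := by positivity
  -- main estimate
  have key : ∀ (x₀ : E n) (r R : ℝ), 0 < r → r ≤ 1 → ‖x₀‖ + 1 ≤ R →
      ∫ x in Metric.closedBall x₀ r, (1/2) * Q x ≤ A / R^2 := by
    intro x₀ r R hr hr1 hRx
    have hR : 0 < R := lt_of_lt_of_le (by positivity) hRx
    set χ : (E n) → ℝ := fun x => ψ (R⁻¹ • x) with hχdef
    set Dχ : (E n) → ((E n) →L[ℝ] ℝ) :=
      fun x => (fderiv ℝ (ψ : EuclideanSpace ℝ (Fin n) → ℝ) (R⁻¹ • x)).comp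
        (R⁻¹ • ContinuousLinearMap.id ℝ (E n)) with hDχdef
    have hχc : Continuous χ := hψc.comp (continuous_const_smul _)
    have hχder : ∀ x, HasFDerivAt χ (Dχ x) x := by
      intro x
      have h1 : HasFDerivAt (fun y : E n => R⁻¹ • y)
          (R⁻¹ • ContinuousLinearMap.id ℝ (E n)) x := (hasFDerivAt_id x).const_smul R⁻¹
      exact ((hψd (R⁻¹ • x)).hasFDerivAt).comp x h1
    have hχ1 : ∀ x, ‖x‖ ≤ R → χ x = 1 := by
      intro x hx
      apply ψ.one_of_mem_closedBall
      have : ‖R⁻¹ • x‖ ≤ 1 := by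
        rw [norm_smul, norm_inv, Real.norm_eq_abs, abs_of_pos hR]
        calc R⁻¹ * ‖x‖ ≤ R⁻¹ * R := by gcongr
          _ = 1 := inv_mul_cancel₀ hR.ne'
      simpa [Metric.mem_closedBall, dist_zero_right] using this
    have hnorm_smul : ∀ x : E n, ‖R⁻¹ • x‖ = R⁻¹ * ‖x‖ := by
      intro x; rw [norm_smul, norm_inv, Real.norm_eq_abs, abs_of_pos hR]
    have hχ0 : ∀ x, 2*R ≤ ‖x‖ → χ x = 0 := by
      intro x hx
      have hmem : R⁻¹ • x ∉ Function.support (ψ : EuclideanSpace ℝ (Fin n) → ℝ) := by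
        rw [ψ.support_eq]
        intro hmem
        rw [Metric.mem_ball, dist_zero_right, hnorm_smul] at hmem
        have : ψ.rOut = 2 := rfl
        rw [this] at hmem
        have h := mul_lt_mul_of_pos_left hmem hR
        rw [← mul_assoc, mul_inv_cancel₀ hR.ne', one_mul] at h
        linarith
      exact Function.notMem_support.mp hmem
    have hDψ0 : ∀ x, 2*R < ‖x‖ → fderiv ℝ (ψ : EuclideanSpace ℝ (Fin n) → ℝ) (R⁻¹ • x) = 0 := by
      intro x hx
      have : R⁻¹ • x ∉ tsupport (ψ : EuclideanSpace ℝ (Fin n) → ℝ) := by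
        rw [ψ.tsupport_eq]
        intro hmem
        rw [Metric.mem_closedBall, dist_zero_right, hnorm_smul] at hmem
        have h2 : ψ.rOut = 2 := rfl
        rw [h2] at hmem
        have h := mul_le_mul_of_nonneg_left hmem hR.le
        rw [← mul_assoc, mul_inv_cancel₀ hR.ne', one_mul] at h
        linarith
      by_contra hne
      exact this (support_fderiv_subset ℝ (by simpa using hne))
    have hDχ0 : ∀ x, 2*R < ‖x‖ → Dχ x = 0 := by
      intro x hx
      simp [hDχdef, hDψ0 x hx]
    have hχnn : ∀ x, 0 ≤ χ x := fun x => ψ.nonneg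
    have hχle : ∀ x, χ x ≤ 1 := fun x => ψ.le_one
    have hDχb : ∀ (x : E n) (w : E n), ‖w‖ ≤ 1 → |Dχ x w| ≤ K / R := by
      intro x w hw
      have h1 : ‖Dχ x‖ ≤ K / R := by
        calc ‖Dχ x‖ ≤ ‖fderiv ℝ (ψ : EuclideanSpace ℝ (Fin n) → ℝ) (R⁻¹ • x)‖ * ‖R⁻¹ • ContinuousLinearMap.id ℝ (E n)‖ :=
              ContinuousLinearMap.opNorm_comp_le _ _
          _ ≤ K * R⁻¹ := by
              apply mul_le_mul (hK _) ?_ (norm_nonneg _) hK0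
              calc ‖R⁻¹ • ContinuousLinearMap.id ℝ (E n)‖
                  ≤ ‖R⁻¹‖ * ‖ContinuousLinearMap.id ℝ (E n)‖ := ContinuousLinearMap.opNorm_smul_le _ _
                _ ≤ ‖R⁻¹‖ * 1 := by
                    apply mul_le_mul_of_nonneg_left ContinuousLinearMap.norm_id_le (norm_nonneg _)
                _ = R⁻¹ := by rw [mul_one, norm_inv, Real.norm_eq_abs, abs_of_pos hR]
          _ = K / R := by rw [div_eq_mul_inv]
      calc |Dχ x w| ≤ ‖Dχ x‖ * ‖w‖ := (Dχ x).le_opNorm w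
        _ ≤ (K/R) * 1 := mul_le_mul h1 hw (norm_nonneg _) (by positivity)
        _ = K / R := mul_one _
    have hDχbc : ∀ w : E n, Continuous fun x => Dχ x w := by
      intro w
      exact (ContinuousLinearMap.apply ℝ ℝ (R⁻¹ • w)).continuous.comp
        (hDψc.comp (continuous_const_smul _))
    -- the vector field
    set f : Fin n → (E n) → ℝ := fun i x => (χ x * χ x * v x) * (fderiv ℝ v x (bb i)) with hfdef
    set f' : Fin n → (E n) → ((E n) →L[ℝ] ℝ) := fun i x =>
      (χ x * χ x * v x) • ((fderiv ℝ v x).comp (0 : (E n) →L[ℝ] (E n))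
        + (fderiv ℝ (fderiv ℝ v) x).flip (bb i))
      + (fderiv ℝ v x (bb i)) • ((χ x * χ x) • fderiv ℝ v x
        + v x • (χ x • Dχ x + χ x • Dχ x)) with hf'def
    have hd : ∀ i x, HasFDerivAt (f i) (f' i x) x := by
      intro i x
      have h1 : HasFDerivAt (fun y => χ y * χ y) (χ x • Dχ x + χ x • Dχ x) x :=
        (hχder x).mul (hχder x)
      have h2 : HasFDerivAt (fun y => χ y * χ y * v y)
          ((χ x * χ x) • fderiv ℝ v x + v x • (χ x • Dχ x + χ x • Dχ x)) x :=
        h1.mul (hv1 x).hasFDerivAt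
      have h3 : HasFDerivAt (fun y => fderiv ℝ v y (bb i))
          ((fderiv ℝ v x).comp (0 : (E n) →L[ℝ] (E n))
            + (fderiv ℝ (fderiv ℝ v) x).flip (bb i)) x :=
        ((hDvd x).hasFDerivAt).clm_apply (hasFDerivAt_const (bb i) x)
      exact h2.mul h3
    have happ : ∀ (i : Fin n) (x : E n), f' i x (bb i) =
        (χ x * χ x * v x) * (fderiv ℝ (fderiv ℝ v) x (bb i) (bb i))
        + (fderiv ℝ v x (bb i)) * ((χ x * χ x) * (fderiv ℝ v x (bb i))
          + v x * (χ x * (Dχ x (bb i)) + χ x * (Dχ x (bb i)))) := by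
      intro i x
      simp [hf'def, ContinuousLinearMap.add_apply, ContinuousLinearMap.smul_apply,
        ContinuousLinearMap.comp_apply, ContinuousLinearMap.flip_apply,
        ContinuousLinearMap.zero_apply, smul_eq_mul, mul_add]
    have hpdc : ∀ i, Continuous fun x => fderiv ℝ v x (bb i) := fun i =>
      (ContinuousLinearMap.apply ℝ ℝ (bb i)).continuous.comp hDvc
    set h₁ : (E n) → ℝ := fun x => ∑ i, (1/2) * (χ x * fderiv ℝ v x (bb i))^2 with hh₁def
    set h₂ : (E n) → ℝ := fun x => ∑ i, 2 * (v x * Dχ x (bb i))^2 with hh₂def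
    have hbbnorm : ∀ i, ‖bb i‖ ≤ 1 := fun i => by
      rw [hbb]; rw [EuclideanSpace.norm_single]; norm_num
    have hptwise : ∀ x, h₁ x - h₂ x ≤ ∑ i, f' i x (bb i) := by
      intro x
      have hsum : ∑ i, f' i x (bb i)
          = (χ x * χ x * v x) * (∑ i, fderiv ℝ (fderiv ℝ v) x (bb i) (bb i))
            + ∑ i, (fderiv ℝ v x (bb i)) * ((χ x * χ x) * (fderiv ℝ v x (bb i))
              + v x * (χ x * (Dχ x (bb i)) + χ x * (Dχ x (bb i)))) := by
        rw [Finset.mul_sum, ← Finset.sum_add_distrib]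
        exact Finset.sum_congr rfl fun i _ => happ i x
      rw [hsum]
      have h0 : 0 ≤ (χ x * χ x * v x) * (∑ i, fderiv ℝ (fderiv ℝ v) x (bb i) (bb i)) :=
        mul_nonneg (mul_nonneg (mul_nonneg (hχnn x) (hχnn x)) (hvnn x)) (hΔ x)
      have hterm : h₁ x - h₂ x ≤ ∑ i, (fderiv ℝ v x (bb i)) * ((χ x * χ x) * (fderiv ℝ v x (bb i))
              + v x * (χ x * (Dχ x (bb i)) + χ x * (Dχ x (bb i)))) := by
        rw [hh₁def, hh₂def, ← Finset.sum_sub_distrib]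
        apply Finset.sum_le_sum
        intro i _
        nlinarith [sq_nonneg (χ x * fderiv ℝ v x (bb i) + 2 * (v x * Dχ x (bb i)))]
      linarith
    have hf'c : ∀ i, Continuous fun x => f' i x (bb i) := by
      intro i
      have heq : (fun x => f' i x (bb i)) = fun x =>
          (χ x * χ x * v x) * (fderiv ℝ (fderiv ℝ v) x (bb i) (bb i))
          + (fderiv ℝ v x (bb i)) * ((χ x * χ x) * (fderiv ℝ v x (bb i))
            + v x * (χ x * (Dχ x (bb i)) + χ x * (Dχ x (bb i)))) := funext fun x => happ i x
      rw [heq]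
      have c1 : Continuous fun x => fderiv ℝ (fderiv ℝ v) x (bb i) (bb i) :=
        (ContinuousLinearMap.apply ℝ ℝ (bb i)).continuous.comp
          ((ContinuousLinearMap.apply ℝ ((E n) →L[ℝ] ℝ) (bb i)).continuous.comp hD2vc)
      have c2 := hpdc i
      have c3 := hDχbc (bb i)
      exact (((hχc.mul hχc).mul hv1.continuous).mul c1).add
        (c2.mul (((hχc.mul hχc).mul c2).add (hv1.continuous.mul ((hχc.mul c3).add (hχc.mul c3)))))
    have hsupp : ∀ i x, 2*R ≤ ‖x‖ → f i x = 0 := by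
      intro i x hx; simp [hfdef, hχ0 x hx]
    have hdiv0 : ∫ x, ∑ i, f' i x (bb i) = 0 :=
      my_div_zero hn f f' hd hf'c (2*R) (by positivity) hsupp
    have hsupp2 : ∀ x : E n, x ∉ Metric.closedBall (0 : E n) (2*R) → (χ x = 0 ∧ Dχ x = 0) := by
      intro x hx
      rw [Metric.mem_closedBall, dist_zero_right, not_le] at hx
      exact ⟨hχ0 x hx.le, hDχ0 x hx⟩
    have h₁int : Integrable h₁ volume := by
      apply Continuous.integrable_of_hasCompactSupport
      · exact continuous_finset_sum _ fun i _ => continuous_const.mul ((hχc.mul (hpdc i)).pow 2)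
      · apply HasCompactSupport.intro (isCompact_closedBall (0 : E n) (2*R))
        intro x hx
        simp [hh₁def, (hsupp2 x hx).1]
    have h₂int : Integrable h₂ volume := by
      apply Continuous.integrable_of_hasCompactSupport
      · exact continuous_finset_sum _ fun i _ =>
          continuous_const.mul ((hv1.continuous.mul (hDχbc (bb i))).pow 2)
      · apply HasCompactSupport.intro (isCompact_closedBall (0 : E n) (2*R))
        intro x hx
        simp [hh₂def, (hsupp2 x hx).2]
    have hdivint : Integrable (fun x => ∑ i, f' i x (bb i)) volume := by
      apply Continuous.integrable_of_hasCompactSupport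
      · exact continuous_finset_sum _ fun i _ => hf'c i
      · apply HasCompactSupport.intro (isCompact_closedBall (0 : E n) (2*R))
        intro x hx
        exact Finset.sum_eq_zero fun i _ => by
          rw [happ i x, (hsupp2 x hx).1, (hsupp2 x hx).2]; simp
    have hmono : ∫ x, (h₁ x - h₂ x) ≤ ∫ x, ∑ i, f' i x (bb i) :=
      integral_mono (h₁int.sub h₂int) hdivint (fun x => hptwise x)
    rw [integral_sub h₁int h₂int, hdiv0] at hmono
    have hh₂le : ∫ x, h₂ x ≤ A / R^2 := by
      have hpt : ∀ x, h₂ x ≤ (2*(n:ℝ)*K^2/R^2) * (v x)^2 := by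
        intro x
        have hterm : ∀ i ∈ Finset.univ, 2 * (v x * Dχ x (bb i))^2 ≤ (2*K^2/R^2) * (v x)^2 := by
          intro i _
          have hb := hDχb x (bb i) (hbbnorm i)
          have h2 : (Dχ x (bb i))^2 ≤ (K/R)^2 := by
            rw [← sq_abs]
            exact pow_le_pow_left₀ (abs_nonneg _) hb 2
          have h3 : (K/R)^2 = K^2/R^2 := by ring
          have h4 : (v x)^2 * ((Dχ x) (bb i))^2 ≤ (v x)^2 * (K/R)^2 :=
            mul_le_mul_of_nonneg_left h2 (sq_nonneg (v x))
          calc 2*(v x * (Dχ x) (bb i))^2 = 2*((v x)^2 * ((Dχ x) (bb i))^2) := by ring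
            _ ≤ 2*((v x)^2 * (K/R)^2) := by linarith
            _ = (2*K^2/R^2) * (v x)^2 := by rw [h3]; ring
        calc h₂ x ≤ ∑ _i : Fin n, (2*K^2/R^2) * (v x)^2 := Finset.sum_le_sum hterm
          _ = (n:ℝ) * ((2*K^2/R^2) * (v x)^2) := by
              rw [Finset.sum_const, Finset.card_univ, Fintype.card_fin, nsmul_eq_mul]
          _ = (2*(n:ℝ)*K^2/R^2) * (v x)^2 := by ring
      calc ∫ x, h₂ x ≤ ∫ x, (2*(n:ℝ)*K^2/R^2) * (v x)^2 :=
            integral_mono h₂int (hint.const_mul _) hpt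
        _ = (2*(n:ℝ)*K^2/R^2) * ∫ x, (v x)^2 := integral_const_mul _ _
        _ = A / R^2 := by rw [hA]; ring
    have hh₁le : ∫ x, h₁ x ≤ A / R^2 := le_trans (by linarith) hh₂le
    have hsub : Metric.closedBall x₀ r ⊆ Metric.closedBall (0 : E n) R := by
      intro x hx
      rw [Metric.mem_closedBall, dist_zero_right]
      rw [Metric.mem_closedBall, dist_eq_norm] at hx
      calc ‖x‖ = ‖(x - x₀) + x₀‖ := by rw [sub_add_cancel]
        _ ≤ ‖x - x₀‖ + ‖x₀‖ := norm_add_le _ _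
        _ ≤ R := by linarith
    have hone : ∀ x ∈ Metric.closedBall x₀ r, (1/2) * Q x = h₁ x := by
      intro x hx
      have hc1 : χ x = 1 := by
        apply hχ1
        have := hsub hx
        rwa [Metric.mem_closedBall, dist_zero_right] at this
      rw [hh₁def, hQdef, Finset.mul_sum]
      exact Finset.sum_congr rfl fun i _ => by rw [hc1]; ring
    calc ∫ x in Metric.closedBall x₀ r, (1/2) * Q x = ∫ x in Metric.closedBall x₀ r, h₁ x :=
          setIntegral_congr_fun measurableSet_closedBall hone
      _ ≤ ∫ x, h₁ x := setIntegral_le_integral h₁int (Filter.Eventually.of_forall fun x =>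
            Finset.sum_nonneg fun i _ => by positivity)
      _ ≤ A / R^2 := hh₁le
  -- conclude Q ≡ 0
  have hQ0 : ∀ x₀, Q x₀ = 0 := by
    intro x₀
    by_contra hne
    have hpos : 0 < Q x₀ := lt_of_le_of_ne (hQnn x₀) (Ne.symm hne)
    have hopen : IsOpen (Q ⁻¹' Set.Ioi (Q x₀/2)) := isOpen_Ioi.preimage hQc
    have hx₀mem : x₀ ∈ Q ⁻¹' Set.Ioi (Q x₀/2) := by
      simp only [Set.mem_preimage, Set.mem_Ioi]; linarith
    obtain ⟨r', hr'pos, hr'sub⟩ := Metric.isOpen_iff.mp hopen x₀ hx₀mem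
    set r := min (r'/2) 1 with hrdef
    have hrpos : 0 < r := lt_min (by linarith) one_pos
    have hrsub : Metric.closedBall x₀ r ⊆ Q ⁻¹' Set.Ioi (Q x₀/2) := by
      intro x hx
      apply hr'sub
      rw [Metric.mem_ball]
      rw [Metric.mem_closedBall] at hx
      calc dist x x₀ ≤ r := hx
        _ ≤ r'/2 := min_le_left _ _
        _ < r' := by linarith
    set δ := (Q x₀/4) * (volume (Metric.closedBall x₀ r)).toReal with hδdef
    have hvolpos : 0 < (volume (Metric.closedBall x₀ r)).toReal :=
      ENNReal.toReal_pos (Metric.measure_closedBall_pos volume x₀ hrpos).ne'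
        measure_closedBall_lt_top.ne
    have hδpos : 0 < δ := by positivity
    have hlow : ∀ R, ‖x₀‖ + 1 ≤ R → δ ≤ A / R^2 := by
      intro R hR
      have h1 : ∫ x in Metric.closedBall x₀ r, (Q x₀/4) ≤
          ∫ x in Metric.closedBall x₀ r, (1/2) * Q x := by
        apply setIntegral_mono_on
        · exact (integrableOn_const_iff).mpr (Or.inr measure_closedBall_lt_top)
        · exact ((continuous_const.mul hQc).continuousOn).integrableOn_compact
            (isCompact_closedBall _ _)
        · exact measurableSet_closedBall
        · intro x hx
          have := hrsub hx
          simp only [Set.mem_preimage, Set.mem_Ioi] at this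
          linarith
      rw [setIntegral_const, smul_eq_mul, mul_comm] at h1
      exact le_trans (le_of_eq hδdef) (le_trans h1 (key x₀ r R hrpos (min_le_right _ _) hR))
    set R := max (‖x₀‖ + 1) (Real.sqrt (A/δ) + 1) with hRdef
    have hR1 : ‖x₀‖ + 1 ≤ R := le_max_left _ _
    have h2 := hlow R hR1
    have hRbig : Real.sqrt (A/δ) + 1 ≤ R := le_max_right _ _
    have hRpos : 0 < R := lt_of_lt_of_le (by positivity) hR1
    have hfin : A / R^2 < δ := by
      rw [div_lt_iff₀ (by positivity)]
      have h3 : Real.sqrt (A/δ) ^ 2 = A/δ := Real.sq_sqrt (by positivity)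
      have h4 : (Real.sqrt (A/δ) + 1)^2 ≤ R^2 := by
        apply pow_le_pow_left₀ (by positivity) hRbig
      have h5 : A/δ * δ = A := div_mul_cancel₀ A hδpos.ne'
      nlinarith [Real.sqrt_nonneg (A/δ)]
    linarith
  -- fderiv vanishes
  have hfd : ∀ x, fderiv ℝ v x = 0 := by
    intro x
    have h1 : ∀ i, fderiv ℝ v x (bb i) = 0 := by
      intro i
      have hz := hQ0 x
      have := (Finset.sum_eq_zero_iff_of_nonneg (fun i (_ : i ∈ Finset.univ) =>
        sq_nonneg (fderiv ℝ v x (bb i)))).mp hz i (Finset.mem_univ i)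
      exact pow_eq_zero_iff two_ne_zero |>.mp this
    apply ContinuousLinearMap.coe_injective
    apply Module.Basis.ext (EuclideanSpace.basisFun (Fin n) ℝ).toBasis
    intro i
    rw [OrthonormalBasis.coe_toBasis, EuclideanSpace.basisFun_apply]
    simpa using h1 i
  exact fun x y => is_const_of_fderiv_eq_zero hv1 hfd x y


lemma eLaplacian_eq {n : ℕ} (f : EuclideanSpace ℝ (Fin n) → ℝ) (x : EuclideanSpace ℝ (Fin n)) :
    eLaplacian f x = ∑ i, fderiv ℝ (fderiv ℝ f) x (EuclideanSpace.single i 1)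
      (EuclideanSpace.single i 1) := by
  unfold eLaplacian
  refine Finset.sum_congr rfl fun i _ => ?_
  rw [iteratedFDeriv_two_apply]
  simp

lemma norm_grad_sq {n : ℕ} (f : EuclideanSpace ℝ (Fin n) → ℝ) (x : EuclideanSpace ℝ (Fin n)) :
    ‖gradient f x‖^2 = ∑ i, (fderiv ℝ f x (EuclideanSpace.single i 1))^2 := by
  have h1 : ∀ i, fderiv ℝ f x (EuclideanSpace.single i 1) = gradient f x i := by
    intro i
    have h2 : (inner ℝ (gradient f x) (EuclideanSpace.single i (1:ℝ)) : ℝ) =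
        fderiv ℝ f x (EuclideanSpace.single i 1) := InnerProductSpace.toDual_symm_apply
    rw [EuclideanSpace.inner_single_right] at h2
    simpa using h2.symm
  rw [EuclideanSpace.norm_eq, Real.sq_sqrt (Finset.sum_nonneg fun i _ => by positivity)]
  exact (Finset.sum_congr rfl fun i _ => by rw [h1 i, Real.norm_eq_abs, sq_abs]).symm

set_option maxHeartbeats 2000000 in
theorem conformal_scalar_ineq_nonpos_Lp_zero
    {n : ℕ} (hn : 3 ≤ n) (σ : EuclideanSpace ℝ (Fin n) → ℝ)
    (hC2 : ContDiff ℝ 2 σ)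
    (hneg : ∀ x, σ x ≤ 0)
    (hineq : ∀ x, 2 * ((n : ℝ) - 1) * eLaplacian σ x
      + ((n : ℝ) - 1) * ((n : ℝ) - 2) * ‖gradient σ x‖ ^ 2 ≤ 0)
    (p : ℝ) (hp : 1 < p)
    (hLp : Integrable (fun x => |σ x| ^ p) volume) :
    ∀ x, σ x = 0 := by
  have hn0 : n ≠ 0 := by omega
  have hn3 : (3:ℝ) ≤ (n:ℝ) := by exact_mod_cast hn
  set c : ℝ := ((n:ℝ) - 2)/2 with hc
  have hc0 : 0 < c := by rw [hc]; linarith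
  set u : EuclideanSpace ℝ (Fin n) → ℝ := fun y => -σ y with hu
  have hu2 : ContDiff ℝ 2 u := hC2.neg
  have hu1 : Differentiable ℝ u := hu2.differentiable two_ne_zero
  have hunn : ∀ y, 0 ≤ u y := fun y => neg_nonneg.mpr (hneg y)
  have hDu : fderiv ℝ u = fun y => -(fderiv ℝ σ y) := funext fun y => fderiv_fun_neg
  have hDud : Differentiable ℝ (fderiv ℝ u) :=
    (hu2.fderiv_right (by norm_num)).differentiable one_ne_zero
  have hD2u : ∀ x, fderiv ℝ (fderiv ℝ u) x = -(fderiv ℝ (fderiv ℝ σ) x) := by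
    intro x; rw [hDu]; exact fderiv_fun_neg
  set bb : Fin n → EuclideanSpace ℝ (Fin n) := fun i => EuclideanSpace.single i 1 with hbb
  set Qu : EuclideanSpace ℝ (Fin n) → ℝ := fun x => ∑ i, (fderiv ℝ u x (bb i))^2 with hQu
  have hQunn : ∀ x, 0 ≤ Qu x := fun x => Finset.sum_nonneg fun i _ => sq_nonneg _
  have hΔu : ∀ x, c * Qu x ≤ ∑ i, fderiv ℝ (fderiv ℝ u) x (bb i) (bb i) := by
    intro x
    have h1 := hineq x
    rw [eLaplacian_eq, norm_grad_sq] at h1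
    have h2 : Qu x = ∑ i, (fderiv ℝ σ x (bb i))^2 := by
      refine Finset.sum_congr rfl fun i _ => ?_
      rw [hDu]; simp
    have h3 : ∑ i, fderiv ℝ (fderiv ℝ u) x (bb i) (bb i)
        = -∑ i, fderiv ℝ (fderiv ℝ σ) x (bb i) (bb i) := by
      rw [← Finset.sum_neg_distrib]
      refine Finset.sum_congr rfl fun i _ => ?_
      rw [hD2u]; simp
    rw [h2, h3]
    set S2 := ∑ i, fderiv ℝ (fderiv ℝ σ) x (bb i) (bb i) with hS2
    set Sg := ∑ i, (fderiv ℝ σ x (bb i))^2 with hSg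
    have hSgnn : 0 ≤ Sg := Finset.sum_nonneg fun i _ => sq_nonneg _
    have h4 : ((n:ℝ)-1) * (((n:ℝ)-2) * Sg + 2 * S2) ≤ 0 := by nlinarith [h1]
    have h5 : ((n:ℝ)-2) * Sg + 2 * S2 ≤ 0 := by nlinarith [h4]
    rw [hc]; linarith
  -- exponent
  obtain ⟨m, hm2, hpm⟩ : ∃ m : ℕ, 2 ≤ m ∧ p ≤ 2*(m:ℝ) := by
    refine ⟨max 2 (Nat.ceil p), le_max_left _ _, ?_⟩
    have h1 : p ≤ (Nat.ceil p : ℝ) := Nat.le_ceil p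
    have h2 : ((Nat.ceil p : ℕ) : ℝ) ≤ ((max 2 (Nat.ceil p) : ℕ) : ℝ) := by
      exact_mod_cast le_max_right 2 (Nat.ceil p)
    have h3 : (0:ℝ) ≤ ((max 2 (Nat.ceil p) : ℕ) : ℝ) := by positivity
    linarith
  obtain ⟨k, rfl⟩ : ∃ k, m = k + 2 := ⟨m - 2, by omega⟩
  -- the composition function G
  set G : ℝ → ℝ := fun t => (1 - Real.exp (-c*t))^(k+2) with hG
  set g1 : ℝ → ℝ := fun t => (((k:ℝ)+2) * (1 - Real.exp (-c*t))^(k+1)) * (c * Real.exp (-c*t))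
    with hg1
  set g2 : ℝ → ℝ := fun t =>
    ((k:ℝ)+2)*((k:ℝ)+1) * (1 - Real.exp (-c*t))^k * (c * Real.exp (-c*t))^2
      - (((k:ℝ)+2) * (1 - Real.exp (-c*t))^(k+1)) * (c^2 * Real.exp (-c*t)) with hg2
  have hexp : ∀ t : ℝ, HasDerivAt (fun s => Real.exp (-c*s)) (Real.exp (-c*t) * -c) t := by
    intro t
    have h1 : HasDerivAt (fun s : ℝ => -c*s) (-c) t := by
      simpa using (hasDerivAt_id t).const_mul (-c)
    exact h1.exp
  have hbase : ∀ t : ℝ, HasDerivAt (fun s => 1 - Real.exp (-c*s)) (c * Real.exp (-c*t)) t := by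
    intro t
    have := (hexp t).const_sub 1
    refine this.congr_deriv ?_
    ring
  have hG1 : ∀ t, HasDerivAt G (g1 t) t := by
    intro t
    have h1 := (hbase t).pow (k+2)
    refine h1.congr_deriv ?_
    rw [hg1, show k+2-1 = k+1 from rfl]
    push_cast
    ring
  have hG2 : ∀ t, HasDerivAt g1 (g2 t) t := by
    intro t
    have hA : HasDerivAt (fun s => ((k:ℝ)+2) * (1 - Real.exp (-c*s))^(k+1))
        (((k:ℝ)+2) * (((k+1:ℕ):ℝ) * (1 - Real.exp (-c*t))^(k+1-1) * (c * Real.exp (-c*t)))) t :=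
      ((hbase t).pow (k+1)).const_mul ((k:ℝ)+2)
    have hB : HasDerivAt (fun s => c * Real.exp (-c*s)) (c * (Real.exp (-c*t) * -c)) t :=
      (hexp t).const_mul c
    have h1 := hA.mul hB
    refine h1.congr_deriv ?_
    rw [hg2, show k+1-1 = k from rfl]
    push_cast
    ring
  have hg1nn : ∀ t, 0 ≤ t → 0 ≤ g1 t := by
    intro t ht
    have hs1 : Real.exp (-c*t) ≤ 1 := Real.exp_le_one_iff.mpr (by nlinarith)
    have he : (0:ℝ) ≤ 1 - Real.exp (-c*t) := by linarith
    rw [hg1]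
    have hek : (0:ℝ) ≤ (1 - Real.exp (-c*t))^(k+1) := pow_nonneg he _
    have hcs : (0:ℝ) ≤ c * Real.exp (-c*t) := by positivity
    positivity
  have hg2g1 : ∀ t, 0 ≤ t → 0 ≤ g2 t + c * g1 t := by
    intro t ht
    have hs1 : Real.exp (-c*t) ≤ 1 := Real.exp_le_one_iff.mpr (by nlinarith)
    have he : (0:ℝ) ≤ 1 - Real.exp (-c*t) := by linarith
    have hkey : g2 t + c * g1 t
        = ((k:ℝ)+2)*((k:ℝ)+1) * (1 - Real.exp (-c*t))^k * (c * Real.exp (-c*t))^2 := by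
      rw [hg2, hg1]; ring
    rw [hkey]
    have hek : (0:ℝ) ≤ (1 - Real.exp (-c*t))^k := pow_nonneg he _
    positivity
  -- the function v
  set v : EuclideanSpace ℝ (Fin n) → ℝ := fun x => G (u x) with hv
  have hGsm : ContDiff ℝ 2 G := by
    rw [hG]
    exact (contDiff_const.sub (Real.contDiff_exp.comp (contDiff_const.mul contDiff_id))).pow (k+2)
  have hv2 : ContDiff ℝ 2 v := hGsm.comp hu2
  have hsle1 : ∀ x, Real.exp (-c * u x) ≤ 1 := fun x =>
    Real.exp_le_one_iff.mpr (by nlinarith [hunn x])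
  have hvnn : ∀ x, 0 ≤ v x := by
    intro x
    rw [show v x = (1 - Real.exp (-c * u x))^(k+2) from rfl]
    exact pow_nonneg (by linarith [hsle1 x]) _
  have hDv : fderiv ℝ v = fun x => g1 (u x) • fderiv ℝ u x :=
    funext fun x => (HasDerivAt.comp_hasFDerivAt x (hG1 (u x)) (hu1 x).hasFDerivAt).fderiv
  have hD2v : ∀ x, fderiv ℝ (fderiv ℝ v) x
      = g1 (u x) • fderiv ℝ (fderiv ℝ u) x
        + (g2 (u x) • fderiv ℝ u x).smulRight (fderiv ℝ u x) := by
    intro x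
    rw [hDv]
    have hs : HasFDerivAt (fun y => g1 (u y)) (g2 (u x) • fderiv ℝ u x) x :=
      HasDerivAt.comp_hasFDerivAt x (hG2 (u x)) (hu1 x).hasFDerivAt
    have hF : HasFDerivAt (fun y => fderiv ℝ u y) (fderiv ℝ (fderiv ℝ u) x) x :=
      (hDud x).hasFDerivAt
    exact (hs.smul hF).fderiv
  have hΔv : ∀ x, 0 ≤ ∑ i, fderiv ℝ (fderiv ℝ v) x (EuclideanSpace.single i 1)
      (EuclideanSpace.single i 1) := by
    intro x
    have heq : ∑ i, fderiv ℝ (fderiv ℝ v) x (EuclideanSpace.single i 1)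
        (EuclideanSpace.single i 1)
        = g1 (u x) * (∑ i, fderiv ℝ (fderiv ℝ u) x (bb i) (bb i)) + g2 (u x) * Qu x := by
      rw [hQu, Finset.mul_sum, Finset.mul_sum, ← Finset.sum_add_distrib]
      refine Finset.sum_congr rfl fun i _ => ?_
      rw [hD2v]
      simp only [ContinuousLinearMap.add_apply, ContinuousLinearMap.smul_apply,
        ContinuousLinearMap.smulRight_apply, smul_eq_mul, hbb]
      ring
    rw [heq]
    have hA := mul_le_mul_of_nonneg_left (hΔu x) (hg1nn (u x) (hunn x))
    have hB := mul_nonneg (hg2g1 (u x) (hunn x)) (hQunn x)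
    nlinarith [hA, hB]
  have hintv : Integrable (fun x => (v x)^2) volume := by
    apply Integrable.mono' (hLp.const_mul (c^p)) ((hv2.continuous.pow 2).aestronglyMeasurable)
    apply Filter.Eventually.of_forall
    intro x
    rw [Real.norm_eq_abs, abs_of_nonneg (sq_nonneg _)]
    set w := 1 - Real.exp (-c * u x) with hw
    have hw0 : 0 ≤ w := by linarith [hsle1 x]
    have hw1 : w ≤ 1 := by have := Real.exp_pos (-c * u x); linarith
    have hwcu : w ≤ c * u x := by
      have h1 := Real.add_one_le_exp (-(c * u x))
      rw [hw]
      have h2 : -c * u x = -(c * u x) := by ring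
      rw [h2]
      linarith
    have e1 : (v x)^2 = w^(2*(k+2)) := by
      rw [show v x = w^(k+2) from rfl, ← pow_mul, Nat.mul_comm]
    have e2 : w^(2*(k+2)) ≤ w ^ p := by
      rcases eq_or_lt_of_le hw0 with h | h
      · rw [← h, Real.zero_rpow (by positivity : p ≠ 0), zero_pow (by positivity)]
      · rw [← Real.rpow_natCast w (2*(k+2))]
        apply Real.rpow_le_rpow_of_exponent_ge h hw1
        push_cast
        push_cast at hpm
        linarith
    have e3 : w ^ p ≤ (c * u x) ^ p :=
      Real.rpow_le_rpow hw0 hwcu (by linarith)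
    have e4 : (c * u x) ^ p = c^p * (u x)^p := Real.mul_rpow hc0.le (hunn x)
    have e5 : u x = |σ x| := by rw [hu, abs_of_nonpos (hneg x)]
    calc (v x)^2 = w^(2*(k+2)) := e1
      _ ≤ w ^ p := e2
      _ ≤ (c * u x) ^ p := e3
      _ = c^p * (u x)^p := e4
      _ = c^p * |σ x|^p := by rw [e5]
  have hconst : ∀ x y, v x = v y := const_of_subharmonic hn0 v hv2 hvnn hΔv hintv
  -- conclude
  intro x
  by_contra hne
  have hσx : σ x < 0 := lt_of_le_of_ne (hneg x) hne
  have hux : 0 < u x := by rw [hu]; simp; linarith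
  have hwx : 0 < 1 - Real.exp (-c * u x) := by
    have h1 : Real.exp (-c * u x) < 1 := by
      rw [Real.exp_lt_one_iff]
      nlinarith
    linarith
  have hvx : 0 < v x := by rw [show v x = (1 - Real.exp (-c * u x))^(k+2) from rfl]; exact pow_pos hwx _
  have hceq : (fun y : EuclideanSpace ℝ (Fin n) => (v y)^2) = fun _ => (v x)^2 :=
    funext fun y => by rw [hconst y x]
  rw [hceq] at hintv
  haveI : Nontrivial (EuclideanSpace ℝ (Fin n)) := by
    refine ⟨0, EuclideanSpace.single (⟨0, by omega⟩ : Fin n) 1, fun h => ?_⟩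
    have h2 := congrArg (fun z => ‖z‖) h
    simp only [norm_zero, EuclideanSpace.norm_single, norm_one] at h2
    exact zero_ne_one h2
  have hvol : volume (Set.univ : Set (EuclideanSpace ℝ (Fin n))) = ⊤ :=
    MeasureTheory.measure_univ_of_isAddLeftInvariant volume
  rcases (integrable_const_iff).mp hintv with h | h
  · nlinarith [h]
  · exact measure_ne_top volume Set.univ hvol
end

section
/- Let n ≥ 3 and let σ : EuclideanSpace ℝ (Fin n) → ℝ be a C² function satisfying the conharmonic equation Δσ(x) = −((n−2)/2)·‖∇σ(x)‖² for all x, and suppose x ↦ ‖∇σ(x)‖ is integrable with respect to Lebesgue measure. Then σ is constant. -/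
open MeasureTheory

open Fin Set

set_option maxHeartbeats 1000000 in
/-- Key lemma: a C² function on ℝⁿ whose Laplacian is `-c ‖∇f‖²` with `c > 0` and whose
gradient has integrable norm has vanishing gradient. -/
lemma conharmonic_aux_grad_zero {m : ℕ} (σ : EuclideanSpace ℝ (Fin (m + 1)) → ℝ)
    (hC2 : ContDiff ℝ 2 σ) {c : ℝ} (hc : 0 < c)
    (hconh : ∀ x, eLaplacian σ x = -c * ‖gradient σ x‖ ^ 2)
    (hgrad : Integrable (fun x => ‖gradient σ x‖) volume) :
    ∀ z, gradient σ z = 0 := by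
  classical
  set L : (Fin (m + 1) → ℝ) ≃L[ℝ] EuclideanSpace ℝ (Fin (m + 1)) :=
    (PiLp.continuousLinearEquiv 2 ℝ (fun _ : Fin (m + 1) => ℝ)).symm with hL
  set gc : (Fin (m + 1) → ℝ) → ℝ := fun x => ‖gradient σ (L x)‖ with hgc_def
  -- basic facts
  have hDσ : ContDiff ℝ 1 (fderiv ℝ σ) := hC2.fderiv_right le_rfl
  have hgrad_cont : Continuous (gradient σ) :=
    (InnerProductSpace.toDual ℝ _).symm.continuous.comp (hC2.continuous_fderiv (by norm_num))
  have hgc_cont : Continuous gc := (hgrad_cont.comp L.continuous).norm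
  have hgc_nonneg : ∀ x, 0 ≤ gc x := fun x => norm_nonneg _
  have hgc_int : Integrable gc volume := by
    have h := (EuclideanSpace.volume_preserving_symm_measurableEquiv_toLp (Fin (m + 1))).symm
    exact (h.integrable_comp_emb (MeasurableEquiv.measurableEmbedding _)).2 hgrad
  -- the vector field and its derivative
  set f : Fin (m + 1) → (Fin (m + 1) → ℝ) → ℝ :=
    fun i x => fderiv ℝ σ (L x) (EuclideanSpace.single i 1) with hf_def
  set f' : Fin (m + 1) → (Fin (m + 1) → ℝ) → (Fin (m + 1) → ℝ) →L[ℝ] ℝ :=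
    fun i x => ((fderiv ℝ (fun w => fderiv ℝ σ w (EuclideanSpace.single i 1)) (L x)).comp
      (L : (Fin (m + 1) → ℝ) →L[ℝ] EuclideanSpace ℝ (Fin (m + 1)))) with hf'_def
  have hfd : ∀ i x, HasFDerivAt (f i) (f' i x) x := by
    intro i x
    have h1 : DifferentiableAt ℝ (fun w => fderiv ℝ σ w (EuclideanSpace.single i 1)) (L x) :=
      ((hDσ.clm_apply contDiff_const).differentiable (by norm_num)).differentiableAt
    exact h1.hasFDerivAt.comp x L.hasFDerivAt
  have hfc : ∀ i, Continuous (f i) := fun i =>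
    ((hC2.continuous_fderiv (by norm_num)).clm_apply continuous_const).comp L.continuous
  -- pointwise bound on |f i|
  have hf_bound : ∀ i x, |f i x| ≤ gc x := by
    intro i x
    have h1 : f i x = inner ℝ (gradient σ (L x)) (EuclideanSpace.single i (1 : ℝ)) :=
      InnerProductSpace.toDual_symm_apply.symm
    rw [h1]
    calc |inner ℝ (gradient σ (L x)) (EuclideanSpace.single i (1 : ℝ))|
        ≤ ‖gradient σ (L x)‖ * ‖EuclideanSpace.single i (1 : ℝ)‖ := abs_real_inner_le_norm _ _
      _ = gc x := by simp [EuclideanSpace.norm_single]; rfl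
  -- divergence identity
  have hdiv : ∀ x, ∑ i, f' i x (Pi.single i 1) = -c * gc x ^ 2 := by
    intro x
    have key : ∀ i : Fin (m + 1), f' i x (Pi.single i 1) =
        iteratedFDeriv ℝ 2 σ (L x) ![EuclideanSpace.single i 1, EuclideanSpace.single i 1] := by
      intro i
      have hLs : L (Pi.single i 1) = EuclideanSpace.single i 1 := rfl
      show fderiv ℝ (fun w => fderiv ℝ σ w (EuclideanSpace.single i 1)) (L x)
        (L (Pi.single i 1)) = _
      rw [hLs, iteratedFDeriv_two_apply]
      have hd : DifferentiableAt ℝ (fderiv ℝ σ) (L x) :=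
        (hDσ.differentiable (by norm_num)).differentiableAt
      rw [fderiv_clm_apply hd (differentiableAt_const _)]
      simp
    rw [Finset.sum_congr rfl fun i _ => key i]
    have : (∑ i, iteratedFDeriv ℝ 2 σ (L x)
        ![EuclideanSpace.single i 1, EuclideanSpace.single i 1]) = eLaplacian σ (L x) := rfl
    rw [this, hconh (L x)]
  -- slice integrals
  have prodInt : ∀ i : Fin (m + 1),
      Integrable (fun p : ℝ × (Fin m → ℝ) => gc (i.insertNth p.1 p.2)) (volume.prod volume) := by
    intro i
    have h := MeasurePreserving.symm _
      (volume_preserving_piFinSuccAbove (fun _ : Fin (m + 1) => ℝ) i)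
    have h2 := (h.integrable_comp_emb (MeasurableEquiv.measurableEmbedding _)).2 hgc_int
    have heq : (gc ∘ ⇑(MeasurableEquiv.piFinSuccAbove (fun _ : Fin (m + 1) => ℝ) i).symm)
        = fun p : ℝ × (Fin m → ℝ) => gc (i.insertNth p.1 p.2) := rfl
    have h3 : (volume : Measure (ℝ × (Fin m → ℝ))) = volume.prod volume := rfl
    rw [heq, h3] at h2; exact h2
  set Gi : Fin (m + 1) → ℝ → ℝ := fun i t => ∫ y, gc (i.insertNth t y) with hGi_def
  have hGi_int : ∀ i, Integrable (Gi i) volume := fun i => (prodInt i).integral_prod_left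
  have hGi_nonneg : ∀ i t, 0 ≤ Gi i t := fun i t =>
    integral_nonneg fun y => hgc_nonneg _
  have hslice_ae : ∀ᵐ t : ℝ, ∀ i : Fin (m + 1),
      Integrable (fun y => gc (i.insertNth t y)) volume :=
    ae_all_iff.2 fun i => (prodInt i).prod_right_ae
  have hslice_ae' : ∀ᵐ t : ℝ, ∀ i : Fin (m + 1),
      (Integrable (fun y => gc (i.insertNth t y)) volume ∧
       Integrable (fun y => gc (i.insertNth (-t) y)) volume) := by
    have hneg : ∀ᵐ t : ℝ, ∀ i : Fin (m + 1),
        Integrable (fun y => gc (i.insertNth (-t) y)) volume :=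
      (Measure.measurePreserving_neg (volume : Measure ℝ)).quasiMeasurePreserving.ae hslice_ae
    filter_upwards [hslice_ae, hneg] with t h1 h2 i
    exact ⟨h1 i, h2 i⟩
  set G : ℝ → ℝ := fun t => ∑ i, (Gi i t + Gi i (-t)) with hG_def
  have hG_int : Integrable G volume :=
    integrable_finset_sum _ fun i _ => (hGi_int i).add ((hGi_int i).comp_neg)
  have hG_nonneg : ∀ t, 0 ≤ G t := fun t =>
    Finset.sum_nonneg fun i _ => add_nonneg (hGi_nonneg i t) (hGi_nonneg i (-t))
  -- main estimate from the divergence theorem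
  have main : ∀ R : ℝ, 0 < R →
      (∀ i : Fin (m + 1), Integrable (fun y => gc (i.insertNth R y)) volume ∧
        Integrable (fun y => gc (i.insertNth (-R) y)) volume) →
      c * ∫ x in Icc (fun _ => -R : Fin (m + 1) → ℝ) (fun _ => R), gc x ^ 2 ≤ G R := by
    intro R hR hsl
    set a : Fin (m + 1) → ℝ := fun _ => -R with ha_def
    set b : Fin (m + 1) → ℝ := fun _ => R with hb_def
    have hab : a ≤ b := fun i => by
      simp only [ha_def, hb_def]; linarith
    have hIcube : IntegrableOn (fun x => gc x ^ 2) (Icc a b) volume :=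
      (hgc_cont.pow 2).integrableOn_Icc
    have Hi : IntegrableOn (fun x => ∑ i, f' i x (Pi.single i 1)) (Icc a b) volume := by
      have : (fun x => ∑ i, f' i x (Pi.single i 1)) = fun x => -c * gc x ^ 2 := funext hdiv
      rw [this]
      exact hIcube.const_mul _
    have hdt := integral_divergence_of_hasFDerivAt_off_countable' a b hab f f' ∅
      Set.countable_empty (fun i => (hfc i).continuousOn) (fun x _ i => hfd i x) Hi
    -- rewrite the LHS
    have hlhs : (∫ x in Icc a b, ∑ i, f' i x (Pi.single i 1))
        = -c * ∫ x in Icc a b, gc x ^ 2 := by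
      rw [show (fun x => ∑ i, f' i x (Pi.single i 1)) = fun x => -c * gc x ^ 2 from funext hdiv]
      exact integral_const_mul _ _
    -- bound the faces
    have hface : ∀ i : Fin (m + 1),
        |(∫ x in Icc (a ∘ i.succAbove) (b ∘ i.succAbove), f i (i.insertNth (b i) x)) -
          ∫ x in Icc (a ∘ i.succAbove) (b ∘ i.succAbove), f i (i.insertNth (a i) x)|
          ≤ Gi i R + Gi i (-R) := by
      intro i
      have hb1 : ∀ (t : ℝ), Integrable (fun y => gc (i.insertNth t y)) volume →
          |∫ x in Icc (a ∘ i.succAbove) (b ∘ i.succAbove), f i (i.insertNth t x)| ≤ Gi i t := by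
        intro t hslt
        have h1 : |∫ x in Icc (a ∘ i.succAbove) (b ∘ i.succAbove), f i (i.insertNth t x)|
            ≤ ∫ x in Icc (a ∘ i.succAbove) (b ∘ i.succAbove), |f i (i.insertNth t x)| := by
          simpa [Real.norm_eq_abs] using
            norm_integral_le_integral_norm (μ := volume.restrict (Icc (a ∘ i.succAbove)
              (b ∘ i.succAbove))) (fun x => f i (i.insertNth t x))
        have h2 : (∫ x in Icc (a ∘ i.succAbove) (b ∘ i.succAbove), |f i (i.insertNth t x)|)
            ≤ ∫ x in Icc (a ∘ i.succAbove) (b ∘ i.succAbove), gc (i.insertNth t x) := by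
          apply setIntegral_mono
          · exact Integrable.mono hslt.integrableOn
              (((hfc i).comp (continuous_const.finInsertNth i
                continuous_id)).abs.aestronglyMeasurable.restrict)
              (Filter.Eventually.of_forall fun y => by
                simpa [Real.norm_eq_abs, abs_abs, abs_of_nonneg (hgc_nonneg _)] using
                  hf_bound i (i.insertNth t y))
          · exact hslt.integrableOn
          · intro y; exact hf_bound i (i.insertNth t y)
        have h3 : (∫ x in Icc (a ∘ i.succAbove) (b ∘ i.succAbove), gc (i.insertNth t x))
            ≤ Gi i t :=
          setIntegral_le_integral hslt (Filter.Eventually.of_forall fun y => hgc_nonneg _)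
        linarith
      calc |(∫ x in Icc (a ∘ i.succAbove) (b ∘ i.succAbove), f i (i.insertNth (b i) x)) -
          ∫ x in Icc (a ∘ i.succAbove) (b ∘ i.succAbove), f i (i.insertNth (a i) x)|
          ≤ |∫ x in Icc (a ∘ i.succAbove) (b ∘ i.succAbove), f i (i.insertNth (b i) x)| +
            |∫ x in Icc (a ∘ i.succAbove) (b ∘ i.succAbove), f i (i.insertNth (a i) x)| :=
            abs_sub _ _
        _ ≤ Gi i R + Gi i (-R) := by
            have h1 := hb1 R (hsl i).1
            have h2 := hb1 (-R) (hsl i).2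
            have hbi : b i = R := rfl
            have hai : a i = -R := rfl
            rw [hbi, hai]
            exact add_le_add h1 h2
    -- combine
    have habs : |∫ x in Icc a b, ∑ i, f' i x (Pi.single i 1)| ≤ G R := by
      rw [hdt]
      calc |∑ i : Fin (m + 1), ((∫ x in Icc (a ∘ i.succAbove) (b ∘ i.succAbove),
              f i (i.insertNth (b i) x)) -
            ∫ x in Icc (a ∘ i.succAbove) (b ∘ i.succAbove), f i (i.insertNth (a i) x))|
          ≤ ∑ i : Fin (m + 1), |(∫ x in Icc (a ∘ i.succAbove) (b ∘ i.succAbove),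
              f i (i.insertNth (b i) x)) -
            ∫ x in Icc (a ∘ i.succAbove) (b ∘ i.succAbove), f i (i.insertNth (a i) x)| :=
            Finset.abs_sum_le_sum_abs _ _
        _ ≤ ∑ i, (Gi i R + Gi i (-R)) := Finset.sum_le_sum fun i _ => hface i
        _ = G R := rfl
    rw [hlhs] at habs
    have h0 : 0 ≤ ∫ x in Icc a b, gc x ^ 2 :=
      setIntegral_nonneg measurableSet_Icc fun y _ => sq_nonneg _
    have : |(-c) * ∫ x in Icc a b, gc x ^ 2| = c * ∫ x in Icc a b, gc x ^ 2 := by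
      rw [abs_mul, abs_neg, abs_of_pos hc, abs_of_nonneg h0]
    linarith [habs, this.symm.le.trans habs]
  -- existence of good radii
  have good : ∀ k : ℝ, ∀ ε : ℝ, 0 < ε → ∃ R : ℝ, k ≤ R ∧ 0 < R ∧
      (∀ i : Fin (m + 1), Integrable (fun y => gc (i.insertNth R y)) volume ∧
        Integrable (fun y => gc (i.insertNth (-R) y)) volume) ∧ G R ≤ ε := by
    intro k ε hε
    by_contra hcon
    push_neg at hcon
    set k' : ℝ := max k 1 with hk'
    have key : ∀ᵐ t : ℝ ∂(volume.restrict (Ioi k')), ENNReal.ofReal ε ≤ (‖G t‖₊ : ENNReal) := by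
      rw [ae_restrict_iff' measurableSet_Ioi]
      filter_upwards [hslice_ae'] with t hsl ht
      have ht1 : k ≤ t := le_trans (le_max_left _ _) (le_of_lt ht)
      have ht2 : (0 : ℝ) < t := lt_of_lt_of_le (lt_of_lt_of_le one_pos (le_max_right k 1)) ht.le
      have := hcon t ht1 ht2 hsl
      have hGt : ε ≤ G t := this.le
      calc ENNReal.ofReal ε ≤ ENNReal.ofReal (G t) := ENNReal.ofReal_le_ofReal hGt
        _ = (‖G t‖₊ : ENNReal) := by
            rw [← Real.enorm_eq_ofReal (hG_nonneg t)]; rfl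
    have hfin : (∫⁻ t, (‖G t‖₊ : ENNReal)) < ⊤ := hG_int.2
    have hbig : (ENNReal.ofReal ε) * volume (Ioi k') ≤ ∫⁻ t in Ioi k', (‖G t‖₊ : ENNReal) := by
      rw [← setLIntegral_const]
      exact lintegral_mono_ae key
    have hne : ENNReal.ofReal ε ≠ 0 := by
      simp only [ne_eq, ENNReal.ofReal_eq_zero, not_le]
      exact hε
    have htop : (ENNReal.ofReal ε) * volume (Ioi k') = ⊤ := by
      rw [Real.volume_Ioi, ENNReal.mul_top hne]
    have hle : (∫⁻ t in Ioi k', (‖G t‖₊ : ENNReal)) ≤ ∫⁻ t, (‖G t‖₊ : ENNReal) :=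
      setLIntegral_le_lintegral _ _
    rw [htop] at hbig
    exact absurd (lt_of_le_of_lt (hbig.trans hle) hfin) (by simp)
  -- integrals over all cubes vanish
  have cube_zero : ∀ r : ℝ, 0 < r →
      (∫ x in Icc (fun _ => -r : Fin (m + 1) → ℝ) (fun _ => r), gc x ^ 2) = 0 := by
    intro r hr
    have h0 : 0 ≤ ∫ x in Icc (fun _ => -r : Fin (m + 1) → ℝ) (fun _ => r), gc x ^ 2 :=
      setIntegral_nonneg measurableSet_Icc fun y _ => sq_nonneg _
    have hub : ∀ ε : ℝ, 0 < ε →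
        (∫ x in Icc (fun _ => -r : Fin (m + 1) → ℝ) (fun _ => r), gc x ^ 2) ≤ 0 + ε := by
      intro ε hε
      obtain ⟨R, hkR, hRpos, hsl, hGR⟩ := good r (c * ε) (mul_pos hc hε)
      have hsub : Icc (fun _ => -r : Fin (m + 1) → ℝ) (fun _ => r) ⊆
          Icc (fun _ => -R : Fin (m + 1) → ℝ) (fun _ => R) := by
        apply Icc_subset_Icc
        · rw [Pi.le_def]; intro j; linarith
        · rw [Pi.le_def]; intro j; exact hkR
      have hmono : (∫ x in Icc (fun _ => -r : Fin (m + 1) → ℝ) (fun _ => r), gc x ^ 2)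
          ≤ ∫ x in Icc (fun _ => -R : Fin (m + 1) → ℝ) (fun _ => R), gc x ^ 2 := by
        apply setIntegral_mono_set ((hgc_cont.pow 2).integrableOn_Icc)
        · exact Filter.Eventually.of_forall fun y => sq_nonneg _
        · exact HasSubset.Subset.eventuallyLE hsub
      have := main R hRpos hsl
      have hle2 : c * (∫ x in Icc (fun _ => -r : Fin (m + 1) → ℝ) (fun _ => r), gc x ^ 2)
          ≤ c * ε := le_trans (by nlinarith) hGR
      have := (mul_le_mul_iff_right₀ hc).1 hle2
      linarith
    have := le_of_forall_pos_le_add hub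
    linarith
  -- hence gc ^ 2 = 0 a.e., hence everywhere by continuity
  have hsq_ae : (fun x => gc x ^ 2) =ᵐ[(volume : Measure (Fin (m + 1) → ℝ))] 0 := by
    have hcube : ∀ r : ℕ, ∀ᵐ x : Fin (m + 1) → ℝ,
        x ∈ Icc (fun _ => -((r : ℝ) + 1) : Fin (m + 1) → ℝ) (fun _ => (r : ℝ) + 1) →
          gc x ^ 2 = 0 := by
      intro r
      have hz := cube_zero ((r : ℝ) + 1) (by positivity)
      have := (setIntegral_eq_zero_iff_of_nonneg_ae
        (Filter.Eventually.of_forall fun y => sq_nonneg (gc y))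
        ((hgc_cont.pow 2).integrableOn_Icc)).1 hz
      have h2 := (ae_restrict_iff' measurableSet_Icc).1 this
      filter_upwards [h2] with x hx hmem
      exact hx hmem
    have hall := ae_all_iff.2 hcube
    filter_upwards [hall] with x hx
    obtain ⟨r, hrx⟩ : ∃ r : ℕ, ∀ i, |x i| ≤ (r : ℝ) + 1 := by
      obtain ⟨M, hM⟩ := Finset.exists_le (Finset.univ.image fun i => |x i|) |>.imp
        (fun M hM => hM)
      obtain ⟨r, hr⟩ := exists_nat_ge M
      exact ⟨r, fun i => le_trans (hM _ (Finset.mem_image_of_mem _ (Finset.mem_univ i)))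
        (by linarith)⟩
    exact hx r ⟨fun i => neg_le_of_abs_le (hrx i), fun i => le_of_abs_le (hrx i)⟩
  have hsq_zero : ∀ x, gc x ^ 2 = 0 := by
    have := Continuous.ae_eq_iff_eq (μ := (volume : Measure (Fin (m + 1) → ℝ)))
      (hgc_cont.pow 2) continuous_const |>.1 hsq_ae
    intro x; exact congrFun this x
  intro z
  have hz : gc (L.symm z) = 0 := by
    have := hsq_zero (L.symm z)
    nlinarith [hgc_nonneg (L.symm z), this]
  have : ‖gradient σ (L (L.symm z))‖ = 0 := hz
  rw [L.apply_symm_apply] at this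
  exact norm_eq_zero.1 this

theorem conharmonic_L1_gradient_constant
    {n : ℕ} (hn : 3 ≤ n) (σ : EuclideanSpace ℝ (Fin n) → ℝ)
    (hC2 : ContDiff ℝ 2 σ)
    (hconh : ∀ x, eLaplacian σ x = -(((n : ℝ) - 2) / 2) * ‖gradient σ x‖ ^ 2)
    (hgrad : Integrable (fun x => ‖gradient σ x‖) volume) :
    ∃ c : ℝ, ∀ x, σ x = c := by
  obtain ⟨m, rfl⟩ : ∃ m, n = m + 1 := ⟨n - 1, by omega⟩
  have hc : (0 : ℝ) < (((m + 1 : ℕ) : ℝ) - 2) / 2 := by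
    have : (3 : ℝ) ≤ ((m + 1 : ℕ) : ℝ) := by exact_mod_cast hn
    linarith
  have hgz := conharmonic_aux_grad_zero σ hC2 hc hconh hgrad
  have hfz : ∀ x, fderiv ℝ σ x = 0 := by
    intro x
    have := hgz x
    unfold gradient at this
    simpa using congrArg (InnerProductSpace.toDual ℝ (EuclideanSpace ℝ (Fin (m + 1)))) this
  refine ⟨σ 0, fun x => ?_⟩
  exact is_const_of_fderiv_eq_zero (hC2.differentiable (by norm_num)) hfz x 0
end

section
/- Let n ≥ 4 and let λ : EuclideanSpace ℝ (Fin n) → ℝ be a C² function with λ(x) > 0 for all x, satisfying the equation 2·λ(x)·Δλ(x) = (n−4)·‖∇λ(x)‖² for all x, and suppose ∫ λ^p < ∞ for some real p with 1 < p < ∞. Then λ is constant. -/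
open MeasureTheory

open Real Metric

section Aux

set_option linter.unusedVariables false

variable {F : Type*} [NormedAddCommGroup F] [NormedSpace ℝ F]

lemma contDiff_fderiv_apply {f : F → ℝ} (hf : ContDiff ℝ 2 f) (v : F) :
    ContDiff ℝ 1 (fun y => fderiv ℝ f y v) :=
  (ContinuousLinearMap.apply ℝ ℝ v).contDiff.comp (hf.fderiv_right (by norm_num))

lemma hasFDerivAt_snd_deriv {f : F → ℝ} (hf : ContDiff ℝ 2 f) (v : F) (x : F) :
    HasFDerivAt (fun y => fderiv ℝ f y v) ((fderiv ℝ (fderiv ℝ f) x).flip v) x := by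
  have hD : HasFDerivAt (fderiv ℝ f) (fderiv ℝ (fderiv ℝ f) x) x :=
    (((hf.fderiv_right (m := 1) (by norm_num)).differentiable one_ne_zero) x).hasFDerivAt
  have := hD.clm_apply (hasFDerivAt_const v x)
  simpa using this

lemma fderiv_snd_deriv {f : F → ℝ} (hf : ContDiff ℝ 2 f) (v x w : F) :
    fderiv ℝ (fun y => fderiv ℝ f y v) x w = fderiv ℝ (fderiv ℝ f) x w v := by
  rw [(hasFDerivAt_snd_deriv hf v x).fderiv]; rfl

lemma continuous_snd_deriv {f : F → ℝ} (hf : ContDiff ℝ 2 f) (v w : F) :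
    Continuous (fun x => fderiv ℝ (fun y => fderiv ℝ f y v) x w) := by
  have h2 : Continuous (fderiv ℝ (fderiv ℝ f)) :=
    (hf.fderiv_right (m := 1) (by norm_num)).continuous_fderiv one_ne_zero
  have : Continuous (fun x => fderiv ℝ (fderiv ℝ f) x w v) :=
    ((ContinuousLinearMap.apply ℝ ℝ v).continuous.comp
      ((ContinuousLinearMap.apply ℝ (F →L[ℝ] ℝ) w).continuous.comp h2))
  refine this.congr fun x => ?_
  exact (fderiv_snd_deriv hf v x w).symm

lemma hasFDerivAt_comp_smul {f : F → ℝ} (hf : ContDiff ℝ 2 f) (c : ℝ) (x : F) :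
    HasFDerivAt (fun y => f (c • y))
      ((fderiv ℝ f (c • x)).comp (c • ContinuousLinearMap.id ℝ F)) x := by
  have hA : HasFDerivAt (fun y : F => c • y) (c • ContinuousLinearMap.id ℝ F) x := by
    exact (hasFDerivAt_id x).const_smul c
  exact ((hf.differentiable two_ne_zero (c • x)).hasFDerivAt).comp x hA

lemma fderiv_comp_smul_apply {f : F → ℝ} (hf : ContDiff ℝ 2 f) (c : ℝ) (x v : F) :
    fderiv ℝ (fun y => f (c • y)) x v = c * fderiv ℝ f (c • x) v := by
  rw [(hasFDerivAt_comp_smul hf c x).fderiv]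
  simp [ContinuousLinearMap.comp_apply, _root_.map_smul]

lemma snd_deriv_comp_smul {f : F → ℝ} (hf : ContDiff ℝ 2 f) (c : ℝ) (x v w : F) :
    fderiv ℝ (fun y => fderiv ℝ (fun z => f (c • z)) y v) x w
      = c ^ 2 * fderiv ℝ (fun y => fderiv ℝ f y v) (c • x) w := by
  have h1 : (fun y => fderiv ℝ (fun z => f (c • z)) y v)
      = fun y => c * fderiv ℝ f (c • y) v := by
    funext y; exact fderiv_comp_smul_apply hf c y v
  rw [h1]
  have hA : HasFDerivAt (fun y : F => c • y) (c • ContinuousLinearMap.id ℝ F) x := by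
    exact (hasFDerivAt_id x).const_smul c
  have h2 : HasFDerivAt (fun y => fderiv ℝ f (c • y) v)
      (((fderiv ℝ (fderiv ℝ f) (c • x)).flip v).comp (c • ContinuousLinearMap.id ℝ F)) x :=
    (hasFDerivAt_snd_deriv hf v (c • x)).comp x hA
  have h3 : HasFDerivAt (fun y => c * fderiv ℝ f (c • y) v)
      (c • (((fderiv ℝ (fderiv ℝ f) (c • x)).flip v).comp
        (c • ContinuousLinearMap.id ℝ F))) x :=
    h2.const_mul c
  rw [h3.fderiv]
  have h4 := fderiv_snd_deriv hf v (c • x) w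
  simp only [ContinuousLinearMap.smul_apply, ContinuousLinearMap.comp_apply,
    ContinuousLinearMap.id_apply, ContinuousLinearMap.flip_apply, smul_eq_mul] at h4 ⊢
  rw [h4, (fderiv ℝ (fderiv ℝ f) (c • x)).map_smul]
  simp only [ContinuousLinearMap.smul_apply, smul_eq_mul]
  ring

end Aux

section Euclid

set_option linter.unusedVariables false

variable {n : ℕ}

local notation "Eu" => EuclideanSpace ℝ (Fin n)
local notation "ee" i => (EuclideanSpace.single i 1 : EuclideanSpace ℝ (Fin n))

/-- Coordinate form of the Laplacian. -/
noncomputable def lap (f : EuclideanSpace ℝ (Fin n) → ℝ) (x : EuclideanSpace ℝ (Fin n)) : ℝ :=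
  ∑ i, fderiv ℝ (fun y => fderiv ℝ f y (ee i)) x (ee i)

lemma eLaplacian_eq_lap {f : EuclideanSpace ℝ (Fin n) → ℝ} (hf : ContDiff ℝ 2 f)
    (x : EuclideanSpace ℝ (Fin n)) : eLaplacian f x = lap f x := by
  unfold eLaplacian lap
  refine Finset.sum_congr rfl fun i _ => ?_
  rw [iteratedFDeriv_two_apply, fderiv_snd_deriv hf]
  simp

lemma continuous_lap {f : EuclideanSpace ℝ (Fin n) → ℝ} (hf : ContDiff ℝ 2 f) :
    Continuous (lap f) :=
  continuous_finset_sum _ fun i _ => continuous_snd_deriv hf _ _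

/-- Green's identity: `∫ u Δφ = ∫ Δu φ` for `φ` compactly supported. -/
lemma green {u φ : EuclideanSpace ℝ (Fin n) → ℝ} (hu : ContDiff ℝ 2 u) (hφ : ContDiff ℝ 2 φ)
    (hφc : HasCompactSupport φ) :
    ∫ x, u x * lap φ x = ∫ x, lap u x * φ x := by
  have hucont := hu.continuous
  have hφcont := hφ.continuous
  have key : ∀ i : Fin n,
      ∫ x, u x * fderiv ℝ (fun y => fderiv ℝ φ y (ee i)) x (ee i)
        = ∫ x, fderiv ℝ (fun y => fderiv ℝ u y (ee i)) x (ee i) * φ x := by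
    intro i
    set v : EuclideanSpace ℝ (Fin n) := ee i with hv
    have hgc : HasCompactSupport (fun x => fderiv ℝ φ x v) := hφc.fderiv_apply ℝ v
    have hgcont : Continuous (fun x => fderiv ℝ φ x v) := (contDiff_fderiv_apply hφ v).continuous
    have hg'c : HasCompactSupport (fun x => fderiv ℝ (fun y => fderiv ℝ φ y v) x v) :=
      hgc.fderiv_apply ℝ v
    have hg'cont := continuous_snd_deriv hφ v v
    have hf'cont : Continuous (fun x => fderiv ℝ u x v) := (contDiff_fderiv_apply hu v).continuous
    have stepA : ∫ x, u x * fderiv ℝ (fun y => fderiv ℝ φ y v) x v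
        = - ∫ x, fderiv ℝ u x v * fderiv ℝ φ x v := by
      exact integral_mul_fderiv_eq_neg_fderiv_mul_of_integrable
        ((hf'cont.mul hgcont).integrable_of_hasCompactSupport (hgc.mul_left))
        ((hucont.mul hg'cont).integrable_of_hasCompactSupport (hg'c.mul_left))
        ((hucont.mul hgcont).integrable_of_hasCompactSupport (hgc.mul_left))
        (fun x _ => hu.differentiable two_ne_zero x)
        (fun x _ => (contDiff_fderiv_apply hφ v).differentiable one_ne_zero x)
    have stepB : ∫ x, (fun x => fderiv ℝ u x v) x * fderiv ℝ φ x v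
        = - ∫ x, fderiv ℝ (fun y => fderiv ℝ u y v) x v * φ x := by
      exact integral_mul_fderiv_eq_neg_fderiv_mul_of_integrable
        (((continuous_snd_deriv hu v v).mul hφcont).integrable_of_hasCompactSupport
          (hφc.mul_left))
        ((hf'cont.mul hgcont).integrable_of_hasCompactSupport (hgc.mul_left))
        ((hf'cont.mul hφcont).integrable_of_hasCompactSupport (hφc.mul_left))
        (fun x _ => (contDiff_fderiv_apply hu v).differentiable one_ne_zero x)
        (fun x _ => hφ.differentiable two_ne_zero x)
    rw [stepA, stepB, neg_neg]
  have hint1 : ∀ i : Fin n,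
      Integrable (fun x => u x * fderiv ℝ (fun y => fderiv ℝ φ y (ee i)) x (ee i)) := by
    intro i
    exact (hucont.mul (continuous_snd_deriv hφ _ _)).integrable_of_hasCompactSupport
      (((hφc.fderiv_apply ℝ _).fderiv_apply ℝ _).mul_left)
  have hint2 : ∀ i : Fin n,
      Integrable (fun x => fderiv ℝ (fun y => fderiv ℝ u y (ee i)) x (ee i) * φ x) := by
    intro i
    exact ((continuous_snd_deriv hu _ _).mul hφcont).integrable_of_hasCompactSupport hφc.mul_left
  calc ∫ x, u x * lap φ x
      = ∫ x, ∑ i, u x * fderiv ℝ (fun y => fderiv ℝ φ y (ee i)) x (ee i) := by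
        simp only [lap, Finset.mul_sum]
    _ = ∑ i, ∫ x, u x * fderiv ℝ (fun y => fderiv ℝ φ y (ee i)) x (ee i) :=
        integral_finset_sum _ fun i _ => hint1 i
    _ = ∑ i, ∫ x, fderiv ℝ (fun y => fderiv ℝ u y (ee i)) x (ee i) * φ x :=
        Finset.sum_congr rfl fun i _ => key i
    _ = ∫ x, ∑ i, fderiv ℝ (fun y => fderiv ℝ u y (ee i)) x (ee i) * φ x :=
        (integral_finset_sum _ fun i _ => hint2 i).symm
    _ = ∫ x, lap u x * φ x := by simp only [lap, Finset.sum_mul]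

lemma lap_eq_zero_of_nonneg {u : EuclideanSpace ℝ (Fin n) → ℝ} (hu : ContDiff ℝ 2 u)
    (hlap : ∀ x, 0 ≤ lap u x) (hu0 : ∀ x, 0 ≤ u x) (hui : Integrable u) :
    ∀ x, lap u x = 0 := by
  set ψb : ContDiffBump (0 : Eu) := ⟨1, 2, one_pos, one_lt_two⟩ with hψb
  have hψ2 : ContDiff ℝ 2 ⇑ψb := ψb.contDiff
  have hbd : ∀ i : Fin n, ∃ Ci : ℝ,
      ∀ y, ‖fderiv ℝ (fun z => fderiv ℝ (⇑ψb) z (ee i)) y (ee i)‖ ≤ Ci := fun i =>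
    ((ψb.hasCompactSupport.fderiv_apply ℝ _).fderiv_apply ℝ _).exists_bound_of_continuous
      (continuous_snd_deriv hψ2 _ _)
  choose Cf hCf using hbd
  set C : ℝ := ∑ i, Cf i with hCdef
  have hC : ∀ y, |lap (⇑ψb) y| ≤ C := by
    intro y
    calc |lap (⇑ψb) y| ≤ ∑ i, |fderiv ℝ (fun z => fderiv ℝ (⇑ψb) z (ee i)) y (ee i)| :=
          Finset.abs_sum_le_sum_abs _ _
      _ ≤ C := Finset.sum_le_sum fun i _ => hCf i y
  have main : ∀ r : ℝ, (∫ x in closedBall (0:Eu) r, lap u x) ≤ 0 := by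
    intro r
    have hIR : ∀ R : ℝ, max r 1 ≤ R →
        (∫ x in closedBall (0:Eu) r, lap u x) ≤ C * (∫ x, u x) / R ^ 2 := by
      intro R hR
      have hR1 : (1:ℝ) ≤ R := le_trans (le_max_right _ _) hR
      have hR0 : (0:ℝ) < R := lt_of_lt_of_le one_pos hR1
      set φ : Eu → ℝ := fun y => ψb (R⁻¹ • y) with hφdef
      have hφ2 : ContDiff ℝ 2 φ := hψ2.comp (contDiff_id.const_smul R⁻¹)
      have hφc : HasCompactSupport φ :=
        ψb.hasCompactSupport.comp_smul (inv_ne_zero hR0.ne')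
      have hφ1 : ∀ x ∈ closedBall (0:Eu) r, φ x = 1 := by
        intro x hx
        apply ψb.one_of_mem_closedBall
        have hxr : ‖x‖ ≤ r := by simpa [mem_closedBall, dist_zero_right] using hx
        have : ‖R⁻¹ • x‖ ≤ 1 := by
          rw [norm_smul, norm_inv, Real.norm_eq_abs, abs_of_pos hR0]
          rw [inv_mul_le_iff₀ hR0, mul_one]
          exact hxr.trans ((le_max_left r 1).trans hR)
        simpa [mem_closedBall, dist_zero_right, hψb] using this
      have hφ0 : ∀ x, 0 ≤ φ x := fun x => ψb.nonneg
      have hlapφ : ∀ x, lap φ x = (R⁻¹) ^ 2 * lap (⇑ψb) (R⁻¹ • x) := by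
        intro x
        unfold lap
        rw [Finset.mul_sum]
        exact Finset.sum_congr rfl fun i _ => snd_deriv_comp_smul hψ2 R⁻¹ x _ _
      have hint : Integrable (fun x => lap u x * φ x) :=
        ((continuous_lap hu).mul hφ2.continuous).integrable_of_hasCompactSupport hφc.mul_left
      have h1 : (∫ x in closedBall (0:Eu) r, lap u x)
          = ∫ x in closedBall (0:Eu) r, lap u x * φ x :=
        setIntegral_congr_fun measurableSet_closedBall
          (fun x hx => by rw [hφ1 x hx, mul_one])
      have h2 : (∫ x in closedBall (0:Eu) r, lap u x * φ x) ≤ ∫ x, lap u x * φ x :=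
        setIntegral_le_integral hint
          (Filter.Eventually.of_forall fun x => mul_nonneg (hlap x) (hφ0 x))
      have h3 : ∫ x, lap u x * φ x = ∫ x, u x * lap φ x := (green hu hφ2 hφc).symm
      have h4 : ∫ x, u x * lap φ x ≤ C * (∫ x, u x) / R ^ 2 := by
        have hpt : ∀ x, ‖u x * lap φ x‖ ≤ (C / R ^ 2) * u x := by
          intro x
          rw [norm_mul, Real.norm_eq_abs, Real.norm_eq_abs, abs_of_nonneg (hu0 x)]
          rw [mul_comm (C / R ^ 2) (u x)]
          apply mul_le_mul_of_nonneg_left _ (hu0 x)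
          rw [hlapφ x, abs_mul, abs_of_nonneg (by positivity : (0:ℝ) ≤ (R⁻¹)^2)]
          calc (R⁻¹) ^ 2 * |lap (⇑ψb) (R⁻¹ • x)| ≤ (R⁻¹) ^ 2 * C := by
                apply mul_le_mul_of_nonneg_left (hC _) (by positivity)
            _ = C / R ^ 2 := by rw [inv_pow]; ring
        calc ∫ x, u x * lap φ x ≤ ‖∫ x, u x * lap φ x‖ := le_abs_self _
          _ ≤ ∫ x, ‖u x * lap φ x‖ := norm_integral_le_integral_norm _
          _ ≤ ∫ x, (C / R ^ 2) * u x := by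
              refine integral_mono_of_nonneg (Filter.Eventually.of_forall fun x => norm_nonneg _)
                (hui.const_mul _) (Filter.Eventually.of_forall hpt)
          _ = C * (∫ x, u x) / R ^ 2 := by rw [integral_const_mul]; ring
      calc (∫ x in closedBall (0:Eu) r, lap u x)
          = ∫ x in closedBall (0:Eu) r, lap u x * φ x := h1
        _ ≤ ∫ x, lap u x * φ x := h2
        _ = ∫ x, u x * lap φ x := h3
        _ ≤ C * (∫ x, u x) / R ^ 2 := h4
    have htends : Filter.Tendsto (fun R : ℝ => C * (∫ x, u x) / R ^ 2)
        Filter.atTop (nhds 0) :=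
      Filter.Tendsto.div_atTop tendsto_const_nhds (Filter.tendsto_pow_atTop two_ne_zero)
    exact ge_of_tendsto htends (Filter.eventually_atTop.2 ⟨max r 1, hIR⟩)
  intro x₀
  by_contra hne
  have hposx : 0 < lap u x₀ := lt_of_le_of_ne (hlap x₀) (Ne.symm hne)
  have hcont : Continuous (lap u) := continuous_lap hu
  obtain ⟨ε, hε, hball⟩ : ∃ ε > 0, ∀ y, dist y x₀ < ε → lap u x₀ / 2 ≤ lap u y := by
    have hev : ∀ᶠ y in nhds x₀, lap u y ∈ Set.Ioi (lap u x₀ / 2) :=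
      hcont.continuousAt.preimage_mem_nhds (Ioi_mem_nhds (by linarith))
    obtain ⟨ε, hε, h⟩ := Metric.eventually_nhds_iff.1 hev
    exact ⟨ε, hε, fun y hy => (h hy).le⟩
  set r : ℝ := ‖x₀‖ + ε with hrdef
  have hsub : ball x₀ ε ⊆ closedBall (0:Eu) r := by
    intro y hy
    rw [mem_ball] at hy
    rw [mem_closedBall, dist_zero_right]
    calc ‖y‖ = ‖x₀ + (y - x₀)‖ := by rw [add_sub_cancel]
      _ ≤ ‖x₀‖ + ‖y - x₀‖ := norm_add_le _ _
      _ ≤ ‖x₀‖ + ε := by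
          have : ‖y - x₀‖ < ε := by rwa [← dist_eq_norm]
          linarith
  have hIOn : IntegrableOn (lap u) (closedBall (0:Eu) r) :=
    hcont.continuousOn.integrableOn_compact (isCompact_closedBall _ _)
  have h5 : (lap u x₀ / 2) * (volume (ball x₀ ε)).toReal ≤ ∫ x in ball x₀ ε, lap u x :=
    by have := setIntegral_ge_of_const_le_real measurableSet_ball measure_ball_lt_top.ne
         (fun y hy => hball y (mem_ball.1 hy)) (hIOn.mono_set hsub)
       exact this
  have h6 : (∫ x in ball x₀ ε, lap u x) ≤ ∫ x in closedBall (0:Eu) r, lap u x :=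
    setIntegral_mono_set hIOn (Filter.Eventually.of_forall fun x => hlap x)
      (HasSubset.Subset.eventuallyLE hsub)
  have hvol : 0 < (volume (ball x₀ ε)).toReal :=
    ENNReal.toReal_pos (measure_ball_pos _ _ hε).ne' measure_ball_lt_top.ne
  nlinarith [main r]

lemma grad_sq_eq {l : EuclideanSpace ℝ (Fin n) → ℝ} (x : EuclideanSpace ℝ (Fin n)) :
    ∑ i, (fderiv ℝ l x (ee i)) ^ 2 = ‖gradient l x‖ ^ 2 := by
  have hfd : fderiv ℝ l x
      = (InnerProductSpace.toDual ℝ (EuclideanSpace ℝ (Fin n))) (gradient l x) :=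
    ((InnerProductSpace.toDual ℝ _).apply_symm_apply (fderiv ℝ l x)).symm
  have hcomp : ∀ i : Fin n, fderiv ℝ l x (ee i) = gradient l x i := by
    intro i
    rw [hfd, InnerProductSpace.toDual_apply_apply, EuclideanSpace.inner_single_right]
    simp
  have hnorm : ‖gradient l x‖ ^ 2 = ∑ i, (gradient l x i) ^ 2 := by
    rw [EuclideanSpace.norm_eq, Real.sq_sqrt (by positivity)]
    simp [sq_abs]
  rw [hnorm]
  exact Finset.sum_congr rfl fun i _ => by rw [hcomp i]

lemma lap_rpow {l : EuclideanSpace ℝ (Fin n) → ℝ} (hC2 : ContDiff ℝ 2 l)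
    (hpos : ∀ x, 0 < l x) (p : ℝ) (x : EuclideanSpace ℝ (Fin n)) :
    lap (fun y => l y ^ p) x
      = p * l x ^ (p - 1) * lap l x
        + p * (p - 1) * l x ^ (p - 2) * ∑ i, (fderiv ℝ l x (ee i)) ^ 2 := by
  have hdiff := hC2.differentiable two_ne_zero
  have hd1 : ∀ y, HasFDerivAt (fun z => l z ^ p) ((p * l y ^ (p - 1)) • fderiv ℝ l y) y :=
    fun y => ((hdiff y).hasFDerivAt).rpow_const (Or.inl (hpos y).ne')
  have hterm : ∀ i : Fin n,
      fderiv ℝ (fun y => fderiv ℝ (fun z => l z ^ p) y (ee i)) x (ee i)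
        = p * l x ^ (p - 1) * (fderiv ℝ (fun y => fderiv ℝ l y (ee i)) x (ee i))
          + p * (p - 1) * l x ^ (p - 2) * (fderiv ℝ l x (ee i)) ^ 2 := by
    intro i
    have hfun : (fun y => fderiv ℝ (fun z => l z ^ p) y (ee i))
        = fun y => (p * l y ^ (p - 1)) * fderiv ℝ l y (ee i) := by
      funext y
      rw [(hd1 y).fderiv]
      simp [smul_eq_mul]
    rw [hfun]
    have ha : HasFDerivAt (fun y => p * l y ^ (p - 1))
        (p • (((p - 1) * l x ^ (p - 1 - 1)) • fderiv ℝ l x)) x :=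
      (((hdiff x).hasFDerivAt).rpow_const (p := p - 1) (Or.inl (hpos x).ne')).const_mul p
    have hb := hasFDerivAt_snd_deriv hC2 (ee i) x
    have hm : HasFDerivAt (fun y => p * l y ^ (p - 1) * fderiv ℝ l y (ee i)) _ x := ha.mul hb
    rw [hm.fderiv, fderiv_snd_deriv hC2 (ee i) x]
    have h12 : p - 1 - 1 = p - 2 := by ring
    simp only [ContinuousLinearMap.add_apply, ContinuousLinearMap.smul_apply,
      ContinuousLinearMap.flip_apply, smul_eq_mul, h12]
    ring
  unfold lap
  rw [Finset.sum_congr rfl fun i _ => hterm i, Finset.sum_add_distrib, ← Finset.mul_sum,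
    ← Finset.mul_sum]

end Euclid

theorem conharmonic_Lp_constant
    {n : ℕ} (hn : 4 ≤ n) (l : EuclideanSpace ℝ (Fin n) → ℝ)
    (hC2 : ContDiff ℝ 2 l)
    (hpos : ∀ x, 0 < l x)
    (hconh : ∀ x, 2 * l x * eLaplacian l x = ((n : ℝ) - 4) * ‖gradient l x‖ ^ 2)
    (p : ℝ) (hp : 1 < p)
    (hLp : Integrable (fun x => l x ^ p) volume) :
    ∃ c : ℝ, ∀ x, l x = c := by
  have hu2 : ContDiff ℝ 2 (fun x => l x ^ p) :=
    hC2.rpow_const_of_ne (fun x => (hpos x).ne')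
  have hlapl : ∀ x, lap l x = eLaplacian l x := fun x => (eLaplacian_eq_lap hC2 x).symm
  have hn4 : (4:ℝ) ≤ (n:ℝ) := by exact_mod_cast hn
  have hcoef : 0 < p * ((n:ℝ) - 4) / 2 + p * (p - 1) := by nlinarith
  have hkey : ∀ x, lap (fun y => l y ^ p) x
      = (p * ((n:ℝ) - 4) / 2 + p * (p - 1)) * (l x ^ (p - 2) * ‖gradient l x‖ ^ 2) := by
    intro x
    rw [lap_rpow hC2 hpos p x, grad_sq_eq x, hlapl x]
    have hlx : (0:ℝ) < l x := hpos x
    have h1 : eLaplacian l x = ((n:ℝ) - 4) * ‖gradient l x‖ ^ 2 / (2 * l x) := by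
      field_simp
      linarith [hconh x]
    rw [h1]
    have h2 : l x ^ (p - 1) = l x ^ (p - 2) * l x := by
      have hh : p - 1 = (p - 2) + 1 := by ring
      rw [hh, Real.rpow_add_one hlx.ne']
    rw [h2]
    field_simp
  have hlapu0 : ∀ x, 0 ≤ lap (fun y => l y ^ p) x := by
    intro x
    rw [hkey x]
    exact mul_nonneg hcoef.le
      (mul_nonneg (Real.rpow_nonneg (hpos x).le _) (sq_nonneg _))
  have hu0 : ∀ x, 0 ≤ (fun y => l y ^ p) x := fun x => Real.rpow_nonneg (hpos x).le p
  have hzero := lap_eq_zero_of_nonneg hu2 hlapu0 hu0 hLp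
  have hgrad : ∀ x, fderiv ℝ l x = 0 := by
    intro x
    have h0 := hzero x
    rw [hkey x] at h0
    have hprod : l x ^ (p - 2) * ‖gradient l x‖ ^ 2 = 0 := by
      rcases mul_eq_zero.1 h0 with h | h
      · exact absurd h hcoef.ne'
      · exact h
    have hG : ‖gradient l x‖ ^ 2 = 0 := by
      rcases mul_eq_zero.1 hprod with h | h
      · exact absurd h (Real.rpow_pos_of_pos (hpos x) _).ne'
      · exact h
    have hg0 : gradient l x = 0 := by
      have := (pow_eq_zero_iff (two_ne_zero)).mp hG
      exact norm_eq_zero.1 this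
    have hfd : fderiv ℝ l x
        = (InnerProductSpace.toDual ℝ (EuclideanSpace ℝ (Fin n))) (gradient l x) :=
      ((InnerProductSpace.toDual ℝ _).apply_symm_apply (fderiv ℝ l x)).symm
    rw [hfd, hg0, map_zero]
  exact ⟨l 0, fun x => is_const_of_fderiv_eq_zero (hC2.differentiable two_ne_zero) hgrad x 0⟩
end
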